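/- arXiv:math/0601592 — 3 statements merged into one kernel-verified Lean document; each statement's English description precedes it below -/
import Mathlib

section
/- For every k ≥ 3, the orbital Schreier graph Γ = Γ_{000…} of the Hanoi Towers group H(k) has subexponential growth: lim_{n→∞} γ(n)^{1/n} = 1. -/
/-- The generator `a_{(ij)}` of the Hanoi Towers group, acting on finite words:
`a_{(ij)}(iw) = jw`, `a_{(ij)}(jw) = iw`, `a_{(ij)}(xw) = x · a_{(ij)}(w)` for `x ∉ {i,j}`,
and `a_{(ij)}(ε) = ε`. -/
def hMove {k : ℕ} (i j : Fin k) : List (Fin k) → List (Fin k)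
  | [] => []
  | x :: w => if x = i then j :: w else if x = j then i :: w else x :: hMove i j w

theorem hMove_involutive {k : ℕ} (i j : Fin k) : ∀ l, hMove i j (hMove i j l) = l := by
  intro l
  induction l with
  | nil => rfl
  | cons x w ih =>
    by_cases hxi : x = i
    · by_cases hij : j = i <;> simp [hMove, hxi, hij]
    · by_cases hxj : x = j
      · by_cases hij : j = i <;> simp [hMove, hxi, hxj, hij]
      · simp [hMove, hxi, hxj, ih]

/-- The generator `a_{(ij)}` as a permutation of the set of finite words. -/
def hGen {k : ℕ} (i j : Fin k) : Equiv.Perm (List (Fin k)) :=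
  ⟨hMove i j, hMove i j, hMove_involutive i j, hMove_involutive i j⟩

/-- The Hanoi Towers group `H(k)`, the subgroup of the permutation group of the set of
finite words over `{0, …, k-1}` generated by the `a_{(ij)}` for `i < j`. -/
def HanoiGroup (k : ℕ) : Subgroup (Equiv.Perm (List (Fin k))) :=
  Subgroup.closure {g | ∃ i j : Fin k, i < j ∧ g = hGen i j}

theorem hMove_length {k : ℕ} (i j : Fin k) (l : List (Fin k)) :
    (hMove i j l).length = l.length := by
  induction l with
  | nil => rfl
  | cons x w ih =>
    by_cases hxi : x = i
    · by_cases hij : j = i <;> simp [hMove, hxi, hij]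
    · by_cases hxj : x = j
      · by_cases hij : j = i <;> simp [hMove, hxi, hxj, hij]
      · simp [hMove, hxi, hxj, ih]

open Classical in
/-- The action of the generator `a_{(ij)}` on infinite words: it swaps `i` and `j` at the
first position whose letter lies in `{i,j}` and leaves all other letters fixed (if no
letter lies in `{i,j}`, the word is fixed). -/
noncomputable def hMoveInf {k : ℕ} (i j : Fin k) (s : ℕ → Fin k) : ℕ → Fin k :=
  fun m =>
    if (s m = i ∨ s m = j) ∧ ∀ l < m, s l ≠ i ∧ s l ≠ j then Equiv.swap i j (s m) else s m

/-- The orbital Schreier graph structure on infinite words: `s` and `t` are adjacent iff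
`s ≠ t` and some generator `a_{(ij)}` (with `i < j`) maps one to the other. -/
noncomputable def infGraph (k : ℕ) : SimpleGraph (ℕ → Fin k) where
  Adj s t := s ≠ t ∧ ∃ i j : Fin k, i < j ∧ (hMoveInf i j s = t ∨ hMoveInf i j t = s)
  symm := ⟨by
    rintro s t ⟨hst, i, j, hij, h⟩
    exact ⟨hst.symm, i, j, hij, h.symm⟩⟩
  loopless := ⟨fun s h => h.1 rfl⟩

/-- `s` lies in the orbit of `ξ` under the group generated by the actions of the
generators `a_{(ij)}`, `i < j`, on infinite words (each generator is an involution, so the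
orbit is the set of images of `ξ` under finite products of generators). -/
noncomputable def inOrbit {k : ℕ} (ξ s : ℕ → Fin k) : Prop :=
  ∃ l : List (Fin k × Fin k), (∀ p ∈ l, p.1 < p.2) ∧
    l.foldl (fun t p => hMoveInf p.1 p.2 t) ξ = s

/-- `γ(n)`: the number of vertices of the orbital Schreier graph `Γ_ξ` (whose vertex set
is the orbit of `ξ`) at graph distance at most `n` from `ξ`. -/
noncomputable def orbitalGrowth {k : ℕ} (ξ : ℕ → Fin k) (n : ℕ) : ℕ :=
  {s | inOrbit ξ s ∧ (infGraph k).dist ξ s ≤ n}.ncard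


namespace HanoiAux

variable {k : ℕ}

/-- The condition under which position `m` is the moved position. -/
def Cond (i j : Fin k) (s : ℕ → Fin k) (m : ℕ) : Prop :=
  (s m = i ∨ s m = j) ∧ ∀ l < m, s l ≠ i ∧ s l ≠ j

lemma hMoveInf_of_cond {i j : Fin k} {s : ℕ → Fin k} {m : ℕ}
    (hC : Cond i j s m) : hMoveInf i j s m = Equiv.swap i j (s m) := by
  unfold hMoveInf
  exact if_pos hC

lemma hMoveInf_of_not_cond {i j : Fin k} {s : ℕ → Fin k} {m : ℕ}
    (hC : ¬ Cond i j s m) : hMoveInf i j s m = s m := by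
  unfold hMoveInf
  exact if_neg hC

lemma cond_of_ne {i j : Fin k} {s : ℕ → Fin k} {m : ℕ}
    (h : hMoveInf i j s m ≠ s m) : Cond i j s m := by
  by_contra hC
  exact h (hMoveInf_of_not_cond hC)

/-- If position `m` changes, the pair of values {before, after} is {i, j}. -/
lemma pair_of_ne {i j : Fin k} {s : ℕ → Fin k} {m : ℕ}
    (h : hMoveInf i j s m ≠ s m) :
    (s m = i ∧ hMoveInf i j s m = j) ∨ (s m = j ∧ hMoveInf i j s m = i) := by
  have hC := cond_of_ne h
  rcases hC.1 with h1 | h1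
  · left; exact ⟨h1, by rw [hMoveInf_of_cond hC, h1, Equiv.swap_apply_left]⟩
  · right; exact ⟨h1, by rw [hMoveInf_of_cond hC, h1, Equiv.swap_apply_right]⟩

/-- Legality: a smaller position avoids both the old and new value of the moved position. -/
lemma legality {i j : Fin k} {s : ℕ → Fin k} {m : ℕ}
    (h : hMoveInf i j s m ≠ s m) {e : ℕ} (he : e < m) :
    s e ≠ s m ∧ s e ≠ hMoveInf i j s m := by
  have hC := cond_of_ne h
  have hij := hC.2 e he
  rcases pair_of_ne h with ⟨h1, h2⟩ | ⟨h1, h2⟩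
  · exact ⟨by rw [h1]; exact hij.1, by rw [h2]; exact hij.2⟩
  · exact ⟨by rw [h1]; exact hij.2, by rw [h2]; exact hij.1⟩

/-- At most one position changes. -/
lemma change_unique {i j : Fin k} {s : ℕ → Fin k} {m e : ℕ}
    (h : hMoveInf i j s m ≠ s m) (he : e ≠ m) : hMoveInf i j s e = s e := by
  have hC := cond_of_ne h
  rcases lt_or_gt_of_ne he with hlt | hgt
  · exact hMoveInf_of_not_cond (fun hCe =>
      hCe.1.elim (hC.2 e hlt).1 (hC.2 e hlt).2)
  · exact hMoveInf_of_not_cond (fun hCe =>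
      hC.1.elim (hCe.2 m hgt).1 (hCe.2 m hgt).2)

/-- `hMoveInf` is an involution. -/
lemma hMoveInf_invol (i j : Fin k) (s : ℕ → Fin k) :
    hMoveInf i j (hMoveInf i j s) = s := by
  classical
  funext m
  by_cases hC : Cond i j s m
  · have hs' : ∀ l < m, hMoveInf i j s l = s l := fun l hl =>
      hMoveInf_of_not_cond (fun hCl => hCl.1.elim (hC.2 l hl).1 (hC.2 l hl).2)
    have hC' : Cond i j (hMoveInf i j s) m := by
      constructor
      · rw [hMoveInf_of_cond hC]
        rcases hC.1 with h1 | h1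
        · rw [h1, Equiv.swap_apply_left]; right; rfl
        · rw [h1, Equiv.swap_apply_right]; left; rfl
      · intro l hl
        rw [hs' l hl]; exact hC.2 l hl
    rw [hMoveInf_of_cond hC', hMoveInf_of_cond hC, Equiv.swap_apply_self]
  · by_cases hex : ∃ l, l < m ∧ (s l = i ∨ s l = j)
    · obtain ⟨l0, hl0⟩ := hex
      -- take the least such l0
      have hex' : ∃ l, l < m ∧ (s l = i ∨ s l = j) := ⟨l0, hl0⟩
      set l1 := Nat.find hex' with hl1def
      have hl1 := Nat.find_spec hex'
      have hmin : ∀ l < l1, ¬(l < m ∧ (s l = i ∨ s l = j)) := fun l hl => Nat.find_min hex' hl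
      have hCl1 : Cond i j s l1 := by
        refine ⟨hl1.2, fun l hl => ?_⟩
        have := hmin l hl
        push_neg at this
        exact this (lt_trans hl hl1.1)
      have hval : hMoveInf i j s l1 = i ∨ hMoveInf i j s l1 = j := by
        rw [hMoveInf_of_cond hCl1]
        rcases hCl1.1 with h1 | h1
        · rw [h1, Equiv.swap_apply_left]; right; rfl
        · rw [h1, Equiv.swap_apply_right]; left; rfl
      have hC' : ¬ Cond i j (hMoveInf i j s) m := fun hC' =>
        hval.elim (hC'.2 l1 hl1.1).1 (hC'.2 l1 hl1.1).2
      rw [hMoveInf_of_not_cond hC', hMoveInf_of_not_cond hC]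
    · push_neg at hex
      have hsm : ¬ (s m = i ∨ s m = j) := fun h1 => hC ⟨h1, hex⟩
      have hall : ∀ l ≤ m, hMoveInf i j s l = s l := by
        intro l hl
        apply hMoveInf_of_not_cond
        intro hCl
        rcases lt_or_eq_of_le hl with hlt | heq
        · exact hCl.1.elim (hex l hlt).1 (hex l hlt).2
        · subst heq; exact hsm hCl.1
      have hC' : ¬ Cond i j (hMoveInf i j s) m := by
        intro hC'
        have h1 := hC'.1
        rw [hall m le_rfl] at h1
        exact hsm h1
      rw [hMoveInf_of_not_cond hC', hMoveInf_of_not_cond hC]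


/-! ### Timeline machinery -/

noncomputable def runL (L : List (Fin k × Fin k)) (s : ℕ → Fin k) : ℕ → Fin k :=
  L.foldl (fun t p => hMoveInf p.1 p.2 t) s

lemma runL_append (A B : List (Fin k × Fin k)) (s : ℕ → Fin k) :
    runL (A ++ B) s = runL B (runL A s) := List.foldl_append

lemma runL_cons (p : Fin k × Fin k) (A : List (Fin k × Fin k)) (s : ℕ → Fin k) :
    runL (p :: A) s = runL A (hMoveInf p.1 p.2 s) := rfl

section Timeline

variable (hk : 0 < k) (L : List (Fin k × Fin k))

/-- The state after `t` moves. -/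
noncomputable def St (t : ℕ) : ℕ → Fin k := runL (L.take t) (fun _ => (⟨0, hk⟩ : Fin k))

lemma St_zero : St hk L 0 = fun _ => (⟨0, hk⟩ : Fin k) := rfl

lemma St_succ_lt {t : ℕ} (h : t < L.length) :
    St hk L (t + 1) = hMoveInf (L.get ⟨t, h⟩).1 (L.get ⟨t, h⟩).2 (St hk L t) := by
  unfold St
  rw [List.take_succ, List.getElem?_eq_getElem h]
  rw [runL_append]
  rfl

lemma St_succ_ge {t : ℕ} (h : L.length ≤ t) : St hk L (t + 1) = St hk L t := by
  unfold St
  rw [List.take_of_length_le h, List.take_of_length_le (le_trans h (Nat.le_succ t))]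

lemma exists_gen {t d : ℕ} (h : St hk L (t + 1) d ≠ St hk L t d) :
    ∃ i j : Fin k, St hk L (t + 1) = hMoveInf i j (St hk L t) := by
  rcases lt_or_ge t L.length with hlt | hge
  · exact ⟨(L.get ⟨t, hlt⟩).1, (L.get ⟨t, hlt⟩).2, St_succ_lt hk L hlt⟩
  · exact absurd (congrFun (St_succ_ge hk L hge) d) h

lemma chg_lt_len {t d : ℕ} (h : St hk L (t + 1) d ≠ St hk L t d) : t < L.length := by
  by_contra hge
  exact h (congrFun (St_succ_ge hk L (le_of_not_gt hge)) d)

/-- Legality along the run. -/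
lemma St_legality {t d e : ℕ} (h : St hk L (t + 1) d ≠ St hk L t d) (he : e < d) :
    St hk L t e ≠ St hk L t d ∧ St hk L t e ≠ St hk L (t + 1) d := by
  obtain ⟨i, j, hij⟩ := exists_gen hk L h
  rw [hij] at h ⊢
  exact HanoiAux.legality h he

lemma St_unchanged {t d e : ℕ} (h : St hk L (t + 1) d ≠ St hk L t d) (he : e ≠ d) :
    St hk L (t + 1) e = St hk L t e := by
  obtain ⟨i, j, hij⟩ := exists_gen hk L h
  rw [hij] at h ⊢
  exact HanoiAux.change_unique h he

/-- Number of moves of position `d` strictly before time `t`. -/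
noncomputable def Cnt (d t : ℕ) : ℕ :=
  ((Finset.range t).filter (fun u => St hk L (u + 1) d ≠ St hk L u d)).card

lemma Cnt_zero (d : ℕ) : Cnt hk L d 0 = 0 := by simp [Cnt]

lemma Cnt_mono {d t t' : ℕ} (h : t ≤ t') : Cnt hk L d t ≤ Cnt hk L d t' :=
  Finset.card_le_card (Finset.filter_subset_filter _ (Finset.range_subset_range.2 h))

lemma Cnt_succ (d t : ℕ) :
    Cnt hk L d (t + 1) =
      if St hk L (t + 1) d ≠ St hk L t d then Cnt hk L d t + 1 else Cnt hk L d t := by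
  unfold Cnt
  rw [Finset.range_add_one, Finset.filter_insert]
  split
  · rw [Finset.card_insert_of_notMem (by simp)]
  · rfl

lemma Cnt_succ_of_chg {d t : ℕ} (h : St hk L (t + 1) d ≠ St hk L t d) :
    Cnt hk L d (t + 1) = Cnt hk L d t + 1 := by rw [Cnt_succ, if_pos h]

lemma Cnt_succ_of_eq {d t : ℕ} (h : ¬ St hk L (t + 1) d ≠ St hk L t d) :
    Cnt hk L d (t + 1) = Cnt hk L d t := by rw [Cnt_succ, if_neg h]

lemma St_eq_of_cnt_eq {d t t' : ℕ} (h : t ≤ t') (hc : Cnt hk L d t = Cnt hk L d t') :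
    St hk L t d = St hk L t' d := by
  induction t', h using Nat.le_induction with
  | base => rfl
  | succ t' ht' ih =>
    by_cases hchg : St hk L (t' + 1) d ≠ St hk L t' d
    · exfalso
      have h1 := Cnt_succ_of_chg hk L hchg
      have h2 := Cnt_mono hk L (d := d) ht'
      omega
    · push_neg at hchg
      rw [hchg]
      exact ih (by rw [hc, Cnt_succ_of_eq hk L (by simp [hchg])])

lemma cnt_ivt {d t i : ℕ} (h : i ≤ Cnt hk L d t) : ∃ u, u ≤ t ∧ Cnt hk L d u = i := by
  induction t with
  | zero => exact ⟨0, le_rfl, by rw [Cnt_zero] at h ⊢; omega⟩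
  | succ t ih =>
    by_cases hchg : St hk L (t + 1) d ≠ St hk L t d
    · rw [Cnt_succ_of_chg hk L hchg] at h
      rcases Nat.lt_or_ge i (Cnt hk L d t + 1) with h1 | h1
      · obtain ⟨u, hu1, hu2⟩ := ih (by omega)
        exact ⟨u, le_trans hu1 (Nat.le_succ t), hu2⟩
      · exact ⟨t + 1, le_rfl, by rw [Cnt_succ_of_chg hk L hchg]; omega⟩
    · rw [Cnt_succ_of_eq hk L hchg] at h
      obtain ⟨u, hu1, hu2⟩ := ih h
      exact ⟨u, le_trans hu1 (Nat.le_succ t), hu2⟩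

/-- The first time at which position `d` has made `i` moves. -/
noncomputable def tMin (d i : ℕ) : ℕ := sInf {t | Cnt hk L d t = i}

lemma tMin_spec {d i : ℕ} (h : ∃ t, Cnt hk L d t = i) : Cnt hk L d (tMin hk L d i) = i :=
  Nat.sInf_mem h

lemma tMin_le {d i t : ℕ} (h : Cnt hk L d t = i) : tMin hk L d i ≤ t := Nat.sInf_le h

lemma tMin_zero (d : ℕ) : tMin hk L d 0 = 0 :=
  Nat.le_zero.1 (tMin_le hk L (Cnt_zero hk L d))

/-- The peg of `d` after its `i`-th move. -/
noncomputable def Peg (d i : ℕ) : Fin k := St hk L (tMin hk L d i) d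

lemma St_peg (t d : ℕ) : St hk L t d = Peg hk L d (Cnt hk L d t) := by
  unfold Peg
  exact (St_eq_of_cnt_eq hk L (tMin_le hk L rfl) (by rw [tMin_spec hk L ⟨t, rfl⟩])).symm

lemma Peg_zero (d : ℕ) : Peg hk L d 0 = ⟨0, hk⟩ := by
  unfold Peg
  rw [tMin_zero]
  rfl

lemma tMin_pos {d i : ℕ} (hi : 1 ≤ i) (h : ∃ t, Cnt hk L d t = i) : 0 < tMin hk L d i := by
  rcases Nat.eq_zero_or_pos (tMin hk L d i) with hz | hp
  · exfalso
    have := tMin_spec hk L h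
    rw [hz, Cnt_zero] at this
    omega
  · exact hp

/-- At time `tMin d i - 1` (for `i ≥ 1`), disk `d` makes its `i`-th move. -/
lemma move_time {d i : ℕ} (hi : 1 ≤ i) (h : ∃ t, Cnt hk L d t = i) :
    St hk L (tMin hk L d i - 1 + 1) d ≠ St hk L (tMin hk L d i - 1) d ∧
      Cnt hk L d (tMin hk L d i - 1) = i - 1 := by
  set T := tMin hk L d i with hT
  have hpos : 0 < T := tMin_pos hk L hi h
  have hTs : T - 1 + 1 = T := by omega
  have hne : Cnt hk L d (T - 1) ≠ i := by
    intro hB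
    have := tMin_le hk L hB
    omega
  by_cases hchg : St hk L (T - 1 + 1) d ≠ St hk L (T - 1) d
  · refine ⟨hchg, ?_⟩
    have h1 := Cnt_succ_of_chg hk L hchg
    rw [hTs] at h1
    have h2 : Cnt hk L d T = i := tMin_spec hk L h
    omega
  · exfalso
    have h1 := Cnt_succ_of_eq hk L hchg
    rw [hTs] at h1
    have h2 : Cnt hk L d T = i := tMin_spec hk L h
    exact hne (by omega)

lemma tMin_mono {d i i' : ℕ} (hii : i ≤ i') (h : ∃ t, Cnt hk L d t = i') :
    tMin hk L d i ≤ tMin hk L d i' := by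
  obtain ⟨u, hu1, hu2⟩ := cnt_ivt hk L (t := tMin hk L d i') (i := i)
    (by rw [tMin_spec hk L h]; exact hii)
  exact le_trans (tMin_le hk L hu2) hu1

end Timeline

/-! ### No two moved positions have identical trajectories -/

section Distinct

variable (hk : 0 < k) (L : List (Fin k × Fin k))

theorem traj_distinct {d d' : ℕ} (hdd : d < d')
    (h1 : 1 ≤ Cnt hk L d' L.length)
    (hCeq : Cnt hk L d L.length = Cnt hk L d' L.length)
    (hP : ∀ i ≤ Cnt hk L d L.length, Peg hk L d i = Peg hk L d' i) : False := by
  set j := Cnt hk L d' L.length with hj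
  have hex : ∀ i, i ≤ j → ∃ t, Cnt hk L d' t = i := by
    intro i hi
    obtain ⟨u, _, hu2⟩ := cnt_ivt hk L (d := d') (t := L.length) (i := i) (by omega)
    exact ⟨u, hu2⟩
  -- u i = the time at which d' makes its i-th move
  set u : ℕ → ℕ := fun i => tMin hk L d' i - 1 with hu
  have hmv : ∀ i, 1 ≤ i → i ≤ j →
      St hk L (u i + 1) d' ≠ St hk L (u i) d' ∧ Cnt hk L d' (u i) = i - 1 := by
    intro i hi hij
    have := move_time hk L hi (hex i hij)
    exact this
  have hulen : ∀ i, 1 ≤ i → i ≤ j → u i < L.length := fun i hi hij =>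
    chg_lt_len hk L (hmv i hi hij).1
  -- disk d cannot have made exactly i moves at the time of d'-s i-th move
  have not_eq : ∀ i, 1 ≤ i → i ≤ j → Cnt hk L d (u i) ≠ i := by
    intro i hi hij heq
    have hm := hmv i hi hij
    have hleg := St_legality hk L hm.1 hdd
    have hd : St hk L (u i) d = Peg hk L d' i := by
      rw [St_peg, heq, hP i (by omega)]
    have hd' : St hk L (u i + 1) d' = Peg hk L d' i := by
      rw [St_peg]
      congr 1
      rw [Cnt_succ_of_chg hk L hm.1, hm.2]
      omega
    rw [hd, hd'] at hleg
    exact hleg.2 rfl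
  have le_aux : ∀ i, 1 ≤ i → i ≤ j → Cnt hk L d (u i) ≤ j := by
    intro i hi hij
    calc Cnt hk L d (u i) ≤ Cnt hk L d L.length :=
          Cnt_mono hk L (le_of_lt (hulen i hi hij))
      _ = j := hCeq
  have key : ∀ m i, 1 ≤ i → i + m = j → Cnt hk L d (u i) < i := by
    intro m
    induction m with
    | zero =>
      intro i hi him
      have h1 := le_aux i hi (by omega)
      have h2 := not_eq i hi (by omega)
      omega
    | succ m ih =>
      intro i hi him
      have hih := ih (i + 1) (by omega) (by omega)
      have humono : u i ≤ u (i + 1) :=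
        Nat.sub_le_sub_right (tMin_mono hk L (Nat.le_succ i) (hex (i + 1) (by omega))) 1
      have h2 := Cnt_mono hk L (d := d) humono
      have h3 := not_eq i hi (by omega)
      omega
  have hfin := key (j - 1) 1 le_rfl (by omega)
  have hm := hmv 1 le_rfl h1
  have hleg := St_legality hk L hm.1 hdd
  have hd : St hk L (u 1) d = (⟨0, hk⟩ : Fin k) := by
    rw [St_peg]
    have : Cnt hk L d (u 1) = 0 := by omega
    rw [this, Peg_zero]
  have hd' : St hk L (u 1) d' = (⟨0, hk⟩ : Fin k) := by
    rw [St_peg]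
    have : Cnt hk L d' (u 1) = 0 := by omega
    rw [this, Peg_zero]
  rw [hd, hd'] at hleg
  exact hleg.1 rfl

end Distinct

/-! ### Counting moved positions -/

section Counting

variable (hk : 0 < k) (L : List (Fin k × Fin k))

/-- Positions `≥ t` still hold peg 0 at time `t`. -/
lemma tail_zero : ∀ t e, t ≤ e → St hk L t e = (⟨0, hk⟩ : Fin k) := by
  intro t
  induction t with
  | zero => intro e _; rfl
  | succ t ih =>
    intro e he
    by_cases hchg : St hk L (t + 1) e ≠ St hk L t e
    · exfalso
      have hleg := St_legality hk L hchg (show t < e by omega)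
      exact hleg.1 (by rw [ih t le_rfl, ih e (by omega)])
    · push_neg at hchg
      rw [hchg, ih e (by omega)]

lemma chg_le {t d : ℕ} (h : St hk L (t + 1) d ≠ St hk L t d) : d ≤ t := by
  by_contra hgt
  have hleg := St_legality hk L h (show t < d by omega)
  exact hleg.1 (by rw [tail_zero hk L t t le_rfl, tail_zero hk L t d (by omega)])

lemma chg_unique_t {t d e : ℕ} (hd : St hk L (t + 1) d ≠ St hk L t d)
    (he : St hk L (t + 1) e ≠ St hk L t e) : d = e := by
  by_contra hne
  exact he (St_unchanged hk L hd (Ne.symm hne))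

/-- The set of moved positions. -/
noncomputable def MovedF : Finset ℕ :=
  (Finset.range L.length).filter (fun d => 1 ≤ Cnt hk L d L.length)

lemma moved_mem {d : ℕ} (h : 1 ≤ Cnt hk L d L.length) : d ∈ MovedF hk L := by
  unfold MovedF
  rw [Finset.mem_filter, Finset.mem_range]
  refine ⟨?_, h⟩
  have hpos : 0 < Cnt hk L d L.length := h
  rw [Cnt, Finset.card_pos] at hpos
  obtain ⟨t, ht⟩ := hpos
  rw [Finset.mem_filter, Finset.mem_range] at ht
  have := chg_le hk L ht.2
  omega

/-- The set of moved positions is downward closed. -/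
lemma moved_downward {d e : ℕ} (h : 1 ≤ Cnt hk L d L.length) (he : e < d) :
    1 ≤ Cnt hk L e L.length := by
  have hex : ∃ t, Cnt hk L d t = 1 := by
    obtain ⟨u, _, hu2⟩ := cnt_ivt hk L (d := d) (t := L.length) (i := 1) h
    exact ⟨u, hu2⟩
  obtain ⟨hchg, hcnt⟩ := move_time hk L le_rfl hex
  set u := tMin hk L d 1 - 1 with hu
  have hleg := St_legality hk L hchg he
  have hd0 : St hk L u d = (⟨0, hk⟩ : Fin k) := by
    rw [St_peg, hcnt]
    exact Peg_zero hk L d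
  have he1 : 1 ≤ Cnt hk L e u := by
    by_contra hlt
    have he0 : Cnt hk L e u = 0 := by omega
    have : St hk L u e = (⟨0, hk⟩ : Fin k) := by
      rw [St_peg, he0]; exact Peg_zero hk L e
    rw [this, hd0] at hleg
    exact hleg.1 rfl
  calc 1 ≤ Cnt hk L e u := he1
    _ ≤ Cnt hk L e L.length := Cnt_mono hk L (le_of_lt (chg_lt_len hk L hchg))

/-- Total moves of all moved positions is at most the number of steps. -/
lemma sum_cnt_le : ∑ d ∈ MovedF hk L, Cnt hk L d L.length ≤ L.length := by
  classical
  have h1 : ∀ d, Cnt hk L d L.length =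
      ∑ t ∈ Finset.range L.length, if St hk L (t + 1) d ≠ St hk L t d then 1 else 0 := by
    intro d
    rw [Cnt, Finset.card_filter]
  calc ∑ d ∈ MovedF hk L, Cnt hk L d L.length
      = ∑ d ∈ MovedF hk L, ∑ t ∈ Finset.range L.length,
          (if St hk L (t + 1) d ≠ St hk L t d then 1 else 0) := by
        exact Finset.sum_congr rfl (fun d _ => h1 d)
    _ = ∑ t ∈ Finset.range L.length, ∑ d ∈ MovedF hk L,
          (if St hk L (t + 1) d ≠ St hk L t d then 1 else 0) := Finset.sum_comm
    _ ≤ ∑ _t ∈ Finset.range L.length, 1 := by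
        apply Finset.sum_le_sum
        intro t _
        rw [← Finset.card_filter]
        rw [Finset.card_le_one]
        intro a ha b hb
        rw [Finset.mem_filter] at ha hb
        exact chg_unique_t hk L ha.2 hb.2
    _ = L.length := by simp

variable (J : ℕ)

/-- Encoding of a short trajectory. -/
noncomputable def encode (d : ℕ) : Fin (J + 2) → Option (Fin k) :=
  fun i => if (i : ℕ) ≤ Cnt hk L d L.length then some (Peg hk L d i) else none

lemma encode_injOn_aux {d d' : ℕ} (hd : d ∈ MovedF hk L) (hd' : d' ∈ MovedF hk L)
    (hJd : Cnt hk L d L.length ≤ J) (hJd' : Cnt hk L d' L.length ≤ J)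
    (heq : encode hk L J d = encode hk L J d') (hne : d ≠ d') : False := by
  rw [MovedF, Finset.mem_filter] at hd hd'
  have hTot : Cnt hk L d L.length = Cnt hk L d' L.length := by
    by_contra hTne
    rcases lt_or_gt_of_ne hTne with hlt | hgt
    · have := congrFun heq ⟨Cnt hk L d L.length + 1, by omega⟩
      rw [encode, encode] at this
      simp only at this
      rw [if_neg (by omega), if_pos (by omega)] at this
      exact Option.some_ne_none _ this.symm
    · have := congrFun heq ⟨Cnt hk L d' L.length + 1, by omega⟩
      rw [encode, encode] at this
      simp only at this
      rw [if_pos (by omega), if_neg (by omega)] at this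
      exact Option.some_ne_none _ this
  have hP : ∀ i, i ≤ Cnt hk L d L.length → Peg hk L d i = Peg hk L d' i := by
    intro i hi
    have := congrFun heq ⟨i, by omega⟩
    rw [encode, encode] at this
    simp only at this
    rw [if_pos (by omega), if_pos (by omega)] at this
    exact Option.some.inj this
  rcases lt_or_gt_of_ne hne with hlt | hgt
  · exact traj_distinct hk L hlt hd'.2 hTot hP
  · exact traj_distinct hk L hgt hd.2 hTot.symm
      (fun i hi => (hP i (by omega)).symm)

/-- The number of moved positions is at most `(k+1)^(J+2) + n/(J+1)`. -/
lemma card_moved_le : (MovedF hk L).card ≤ (k + 1) ^ (J + 2) + L.length / (J + 1) := by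
  classical
  set M1 := (MovedF hk L).filter (fun d => Cnt hk L d L.length ≤ J) with hM1
  set M2 := (MovedF hk L).filter (fun d => ¬ Cnt hk L d L.length ≤ J) with hM2
  have hsplit : M1.card + M2.card = (MovedF hk L).card :=
    Finset.card_filter_add_card_filter_not _
  have hM2card : M2.card ≤ L.length / (J + 1) := by
    rw [Nat.le_div_iff_mul_le (by omega : 0 < J + 1)]
    calc M2.card * (J + 1) = M2.card • (J + 1) := by rw [smul_eq_mul]
      _ ≤ ∑ d ∈ M2, Cnt hk L d L.length := by
          apply Finset.card_nsmul_le_sum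
          intro d hdm
          rw [hM2, Finset.mem_filter] at hdm
          omega
      _ ≤ ∑ d ∈ MovedF hk L, Cnt hk L d L.length := by
          apply Finset.sum_le_sum_of_subset
          exact Finset.filter_subset _ _
      _ ≤ L.length := sum_cnt_le hk L
  have hM1card : M1.card ≤ (k + 1) ^ (J + 2) := by
    have := Finset.card_le_card_of_injOn (encode hk L J)
      (fun d _ => Finset.mem_univ (encode hk L J d)) (t := Finset.univ) (s := M1) ?inj
    · calc M1.card ≤ (Finset.univ : Finset (Fin (J + 2) → Option (Fin k))).card := this
        _ = (k + 1) ^ (J + 2) := by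
          rw [Finset.card_univ, Fintype.card_fun, Fintype.card_option, Fintype.card_fin,
            Fintype.card_fin]
    · intro d hd d' hd' heq
      by_contra hne
      rw [Finset.mem_coe, hM1, Finset.mem_filter] at hd hd'
      exact encode_injOn_aux hk L J hd.1 hd'.1 hd.2 hd'.2 heq hne
  omega

/-- Every nonzero position of the final state is below the bound. -/
lemma endpoint_bound (d : ℕ)
    (hnz : runL L (fun _ => (⟨0, hk⟩ : Fin k)) d ≠ (⟨0, hk⟩ : Fin k)) :
    d < (k + 1) ^ (J + 2) + L.length / (J + 1) := by
  have hSt : St hk L L.length = runL L (fun _ => (⟨0, hk⟩ : Fin k)) := by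
    unfold St
    rw [List.take_length]
  have hTot : 1 ≤ Cnt hk L d L.length := by
    by_contra hlt
    have h0 : Cnt hk L d L.length = 0 := by omega
    apply hnz
    rw [← hSt, St_peg, h0]
    exact Peg_zero hk L d
  have hsub : Finset.range (d + 1) ⊆ MovedF hk L := by
    intro e he
    rw [Finset.mem_range] at he
    rcases Nat.lt_or_ge e d with hlt | hge
    · exact moved_mem hk L (moved_downward hk L hTot hlt)
    · have : e = d := by omega
      subst this
      exact moved_mem hk L hTot
  have := Finset.card_le_card hsub
  rw [Finset.card_range] at this
  have := card_moved_le hk L J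
  omega

end Counting

/-! ### From the Schreier graph ball to move sequences -/

section Graph

variable (hk : 0 < k)

lemma reach_run (s : ℕ → Fin k) (Lst : List (Fin k × Fin k))
    (hlt : ∀ p ∈ Lst, p.1 < p.2) : (infGraph k).Reachable s (runL Lst s) := by
  induction Lst generalizing s with
  | nil => exact SimpleGraph.Reachable.refl s
  | cons p T ih =>
    rw [runL_cons]
    have step : (infGraph k).Reachable s (hMoveInf p.1 p.2 s) := by
      by_cases hne : hMoveInf p.1 p.2 s = s
      · rw [hne]
      · apply SimpleGraph.Adj.reachable
        exact ⟨fun h => hne h.symm, p.1, p.2, hlt p List.mem_cons_self, Or.inl rfl⟩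
    exact step.trans (ih (hMoveInf p.1 p.2 s) (fun q hq => hlt q (List.mem_cons_of_mem p hq)))

lemma walk_to_run {a b : ℕ → Fin k} (w : (infGraph k).Walk a b) :
    ∃ Lst : List (Fin k × Fin k), Lst.length = w.length ∧ runL Lst a = b := by
  induction w with
  | nil => exact ⟨[], rfl, rfl⟩
  | @cons a c b h w ih =>
    obtain ⟨_, i, j, _, hor⟩ := h
    have hc : hMoveInf i j a = c := by
      rcases hor with h1 | h1
      · exact h1
      · rw [← h1, HanoiAux.hMoveInf_invol]
    obtain ⟨T, hT1, hT2⟩ := ih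
    refine ⟨(i, j) :: T, ?_, ?_⟩
    · show T.length + 1 = w.length + 1; rw [hT1]
    · rw [runL_cons]
      simp only
      rw [hc, hT2]

/-- The cylinder set of words supported on `[0, B)`. -/
def Cyl (B : ℕ) : Set (ℕ → Fin k) := {s | ∀ d, B ≤ d → s d = (⟨0, hk⟩ : Fin k)}

lemma cyl_eq_image (B : ℕ) :
    Cyl hk B = (fun (f : Fin B → Fin k) (d : ℕ) =>
      if h : d < B then f ⟨d, h⟩ else (⟨0, hk⟩ : Fin k)) '' Set.univ := by
  ext s
  constructor
  · intro hs
    refine ⟨fun i => s i, Set.mem_univ _, ?_⟩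
    funext d
    simp only
    by_cases h : d < B
    · rw [dif_pos h]
    · rw [dif_neg h, hs d (by omega)]
  · rintro ⟨f, -, rfl⟩ d hd
    simp only
    rw [dif_neg (by omega : ¬ d < B)]

lemma cyl_finite (B : ℕ) : (Cyl hk B).Finite := by
  rw [cyl_eq_image]
  exact Set.finite_univ.image _

lemma cyl_ncard (B : ℕ) : (Cyl hk B).ncard ≤ k ^ B := by
  rw [cyl_eq_image]
  calc ((fun (f : Fin B → Fin k) (d : ℕ) =>
          if h : d < B then f ⟨d, h⟩ else (⟨0, hk⟩ : Fin k)) '' Set.univ).ncard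
      ≤ (Set.univ : Set (Fin B → Fin k)).ncard := Set.ncard_image_le Set.finite_univ
    _ = k ^ B := by
        rw [Set.ncard_univ, Nat.card_eq_fintype_card, Fintype.card_fun, Fintype.card_fin,
          Fintype.card_fin]

lemma ball_subset_cyl (n J : ℕ) :
    {s | inOrbit (fun _ => (⟨0, hk⟩ : Fin k)) s ∧
        (infGraph k).dist (fun _ => (⟨0, hk⟩ : Fin k)) s ≤ n} ⊆
      Cyl hk ((k + 1) ^ (J + 2) + n / (J + 1)) := by
  rintro s ⟨⟨Lo, hlt, horb⟩, hdist⟩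
  have hreach : (infGraph k).Reachable (fun _ => (⟨0, hk⟩ : Fin k)) s := by
    rw [← horb]
    exact reach_run (fun _ => (⟨0, hk⟩ : Fin k)) Lo hlt
  obtain ⟨w, hw⟩ := hreach.exists_walk_length_eq_dist
  obtain ⟨Lst, hL1, hL2⟩ := walk_to_run w
  intro d hd
  by_contra hnz
  have hb := endpoint_bound hk Lst J d (by rw [show runL Lst _ = s from hL2]; exact hnz)
  have hlen : Lst.length ≤ n := by omega
  have : Lst.length / (J + 1) ≤ n / (J + 1) := Nat.div_le_div_right hlen
  omega

/-- The growth function is bounded by the cylinder cardinality. -/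
lemma growth_le (n J : ℕ) :
    orbitalGrowth (fun _ => (⟨0, hk⟩ : Fin k)) n ≤ k ^ ((k + 1) ^ (J + 2) + n / (J + 1)) := by
  unfold orbitalGrowth
  calc {s | inOrbit (fun _ => (⟨0, hk⟩ : Fin k)) s ∧
          (infGraph k).dist (fun _ => (⟨0, hk⟩ : Fin k)) s ≤ n}.ncard
      ≤ (Cyl hk ((k + 1) ^ (J + 2) + n / (J + 1))).ncard :=
        Set.ncard_le_ncard (ball_subset_cyl hk n J) (cyl_finite hk _)
    _ ≤ k ^ ((k + 1) ^ (J + 2) + n / (J + 1)) := cyl_ncard hk _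

lemma growth_pos (n : ℕ) : 1 ≤ orbitalGrowth (fun _ => (⟨0, hk⟩ : Fin k)) n := by
  unfold orbitalGrowth
  have hfin : {s | inOrbit (fun _ => (⟨0, hk⟩ : Fin k)) s ∧
      (infGraph k).dist (fun _ => (⟨0, hk⟩ : Fin k)) s ≤ n}.Finite :=
    Set.Finite.subset (cyl_finite hk ((k + 1) ^ (0 + 2) + n / (0 + 1)))
      (ball_subset_cyl hk n 0)
  exact (Set.ncard_pos hfin).2 ⟨fun _ => (⟨0, hk⟩ : Fin k),
    ⟨[], by intro p hp; exact absurd hp List.not_mem_nil, rfl⟩,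
    by rw [SimpleGraph.dist_self]; omega⟩

end Graph

end HanoiAux

/-- For every `k ≥ 3`, the orbital Schreier graph `Γ_{000…}` of `H(k)`
has subexponential growth: `γ(n)^(1/n) → 1` as `n → ∞`. -/
theorem hanoi_orbital_growth_subexponential (k : ℕ) (hk : 3 ≤ k) :
    Filter.Tendsto
      (fun n : ℕ => (orbitalGrowth (fun _ => (⟨0, by omega⟩ : Fin k)) n : ℝ) ^ (1 / (n : ℝ)))
      Filter.atTop (nhds 1) := by
  have hk0 : 0 < k := by omega
  have hgpos : ∀ n : ℕ, 1 ≤ orbitalGrowth (fun _ => (⟨0, by omega⟩ : Fin k)) n :=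
    fun n => HanoiAux.growth_pos hk0 n
  have hgle : ∀ n J : ℕ, orbitalGrowth (fun _ => (⟨0, by omega⟩ : Fin k)) n ≤
      k ^ ((k + 1) ^ (J + 2) + n / (J + 1)) :=
    fun n J => HanoiAux.growth_le hk0 n J
  set g : ℕ → ℕ := fun n => orbitalGrowth (fun _ => (⟨0, by omega⟩ : Fin k)) n with hg
  have hgposR : ∀ n : ℕ, (0 : ℝ) < g n := by
    intro n
    exact_mod_cast lt_of_lt_of_le Nat.zero_lt_one (hgpos n)
  have hlogk : 0 < Real.log k := Real.log_pos (by exact_mod_cast (by omega : 1 < k))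
  -- Step A: log (g n) / n → 0
  have hA : Filter.Tendsto (fun n : ℕ => Real.log (g n) * (1 / (n : ℝ)))
      Filter.atTop (nhds 0) := by
    rw [Metric.tendsto_atTop]
    intro ε hε
    set J : ℕ := ⌈2 * Real.log k / ε⌉₊ with hJ
    set A : ℝ := ((k : ℝ) + 1) ^ (J + 2) with hAdef
    have hApos : 0 ≤ A := by positivity
    refine ⟨⌈A * Real.log k * 2 / ε⌉₊ + 1, fun n hn => ?_⟩
    have hn1 : 1 ≤ n := by omega
    have hnR : (0 : ℝ) < n := by exact_mod_cast hn1
    -- bound on log (g n)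
    have h1 : Real.log (g n) ≤ (A + (n : ℝ) / ((J : ℝ) + 1)) * Real.log k := by
      have hb := hgle n J
      have hcast : ((g n : ℕ) : ℝ) ≤ ((k : ℝ)) ^ ((k + 1) ^ (J + 2) + n / (J + 1)) := by
        exact_mod_cast hb
      have hlog1 : Real.log (g n) ≤
          (((k + 1) ^ (J + 2) + n / (J + 1) : ℕ) : ℝ) * Real.log k := by
        rw [← Real.log_pow]
        exact Real.log_le_log (hgposR n) (by exact_mod_cast hb)
      refine le_trans hlog1 ?_
      apply mul_le_mul_of_nonneg_right _ (le_of_lt hlogk)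
      push_cast
      rw [← hAdef]
      have := Nat.cast_div_le (α := ℝ) (m := n) (n := J + 1)
      push_cast at this
      linarith
    have hf0 : 0 ≤ Real.log (g n) * (1 / (n : ℝ)) := by
      apply mul_nonneg
      · exact Real.log_nonneg (by exact_mod_cast hgpos n)
      · positivity
    rw [Real.dist_eq, sub_zero, abs_of_nonneg hf0]
    have h2 : Real.log (g n) * (1 / (n : ℝ)) ≤
        A * Real.log k / n + Real.log k / ((J : ℝ) + 1) := by
      have hstep : Real.log (g n) * (1 / (n : ℝ)) ≤
          ((A + (n : ℝ) / ((J : ℝ) + 1)) * Real.log k) * (1 / (n : ℝ)) :=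
        mul_le_mul_of_nonneg_right h1 (by positivity)
      refine le_trans hstep (le_of_eq ?_)
      have hJ1 : ((J : ℝ) + 1) ≠ 0 := by positivity
      field_simp
    -- first summand < ε/2
    have hn2 : A * Real.log k * 2 / ε < n := by
      calc A * Real.log k * 2 / ε ≤ (⌈A * Real.log k * 2 / ε⌉₊ : ℝ) := Nat.le_ceil _
        _ < n := by exact_mod_cast (by omega : ⌈A * Real.log k * 2 / ε⌉₊ < n)
    have h3 : A * Real.log k / n < ε / 2 := by
      rw [div_lt_iff₀ hnR]
      have := (div_lt_iff₀ (by positivity : (0 : ℝ) < ε)).1 hn2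
      nlinarith
    -- second summand ≤ ε/2
    have h4 : Real.log k / ((J : ℝ) + 1) ≤ ε / 2 := by
      have hJc : 2 * Real.log k / ε ≤ (J : ℝ) := Nat.le_ceil _
      have hq : (0 : ℝ) < 2 * Real.log k / ε := by positivity
      have h5 : Real.log k / ((J : ℝ) + 1) ≤ Real.log k / (2 * Real.log k / ε) := by
        apply div_le_div_of_nonneg_left (le_of_lt hlogk) hq
        linarith
      have h6 : Real.log k / (2 * Real.log k / ε) = ε / 2 := by
        field_simp
      linarith
    linarith
  -- Step B: conclude via exp/log
  have hexp := (Real.continuous_exp.tendsto 0).comp hA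
  rw [Real.exp_zero] at hexp
  refine hexp.congr (fun n => ?_)
  exact (Real.rpow_def_of_pos (hgposR n) (1 / (n : ℝ))).symm
end

section
/- For the Hanoi Towers group H(3) and every n ≥ 1, the set of real eigenvalues of the adjacency matrix T_n of the level-n Schreier graph has exactly 3·2^{n−1} − 1 elements. -/
/-- The action of the generator `a_{(ij)}` on words of length `n`, viewed as functions
`Fin n → Fin k` (via the word `List.ofFn u`; the action preserves length). -/
def levelMove {k n : ℕ} (i j : Fin k) (u : Fin n → Fin k) : Fin n → Fin k :=
  fun m => (hMove i j (List.ofFn u)).get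
    (Fin.cast (by rw [hMove_length, List.length_ofFn]) m)

/-- The level-`n` Schreier graph `Γ_n` of `H(k)`: vertices are the `k^n` words of length
`n` over `{0, …, k-1}`, and `u`, `v` are adjacent iff `u ≠ v` and some generator
`a_{(ij)}` (with `i < j`) maps one to the other. -/
def levelGraph (k n : ℕ) : SimpleGraph (Fin n → Fin k) where
  Adj u v := u ≠ v ∧ ∃ i j : Fin k, i < j ∧ (levelMove i j u = v ∨ levelMove i j v = u)
  symm := ⟨by
    rintro u v ⟨huv, i, j, hij, h⟩
    exact ⟨huv.symm, i, j, hij, h.symm⟩⟩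
  loopless := ⟨fun u h => h.1 rfl⟩

open Classical in
/-- The adjacency matrix `T_n = Σ_{i<j} ρ_n(a_{(ij)})` of the level-`n` Schreier graph of
`H(k)`: the `(u,v)` entry counts the generators `a_{(ij)}`, `i < j`, with
`a_{(ij)}(v) = u` (each summand is the permutation matrix of `ρ_n(a_{(ij)})`). -/
noncomputable def adjMat (k n : ℕ) : Matrix (Fin n → Fin k) (Fin n → Fin k) ℝ :=
  Matrix.of fun u v =>
    ((Finset.univ.filter
      fun p : Fin k × Fin k => p.1 < p.2 ∧ levelMove p.1 p.2 v = u).card : ℝ)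

/-- The polynomial `f(x) = x² - x - 3`, as a map `ℝ → ℝ`. -/
def hanoiPoly : ℝ → ℝ := fun x => x ^ 2 - x - 3

lemma ofFn_levelMove {k n : ℕ} (i j : Fin k) (u : Fin n → Fin k) :
    List.ofFn (levelMove i j u) = hMove i j (List.ofFn u) := by
  apply List.ext_get
  · simp [hMove_length]
  · intro m h1 h2
    simp [levelMove, List.get_ofFn]

lemma levelMove_invol {k n : ℕ} (i j : Fin k) (u : Fin n → Fin k) :
    levelMove i j (levelMove i j u) = u := by
  apply List.ofFn_injective
  rw [ofFn_levelMove, ofFn_levelMove, hMove_involutive]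

lemma ofFn_cons {k n : ℕ} (y : Fin k) (v : Fin n → Fin k) :
    List.ofFn (Fin.cons y v : Fin (n+1) → Fin k) = y :: List.ofFn v := by
  rw [List.ofFn_succ]; simp

lemma levelMove_cons {k n : ℕ} (i j x : Fin k) (u : Fin n → Fin k) :
    levelMove i j (Fin.cons x u) =
      if x = i then Fin.cons j u else if x = j then Fin.cons i u
        else Fin.cons x (levelMove i j u) := by
  apply List.ofFn_injective
  rw [ofFn_levelMove, ofFn_cons]
  by_cases h1 : x = i
  · simp [hMove, h1, ofFn_cons]
  · by_cases h2 : x = j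
    · by_cases h3 : j = i <;> simp [hMove, h1, h2, h3, ofFn_cons, ofFn_levelMove]
    · simp [hMove, h1, h2, ofFn_cons, ofFn_levelMove]

def HasEv (n : ℕ) (lam : ℝ) : Prop :=
  ∃ w : (Fin n → Fin 3) → ℝ, w ≠ 0 ∧
    ∀ u, w (levelMove 0 1 u) + w (levelMove 0 2 u) + w (levelMove 1 2 u) = lam * w u

lemma adjMat_apply (n : ℕ) (u v : Fin n → Fin 3) :
    adjMat 3 n u v =
      (if levelMove 0 1 v = u then (1:ℝ) else 0) +
      (if levelMove 0 2 v = u then 1 else 0) +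
      (if levelMove 1 2 v = u then 1 else 0) := by
  classical
  show ((Finset.univ.filter
      fun p : Fin 3 × Fin 3 => p.1 < p.2 ∧ levelMove p.1 p.2 v = u).card : ℝ) = _
  rw [Finset.card_filter, Fintype.sum_prod_type, Fin.sum_univ_three]
  rw [Fin.sum_univ_three, Fin.sum_univ_three, Fin.sum_univ_three]
  have h00 : ¬((0:Fin 3) < 0) := by decide
  have h01 : ((0:Fin 3) < 1) := by decide
  have h02 : ((0:Fin 3) < 2) := by decide
  have h10 : ¬((1:Fin 3) < 0) := by decide
  have h11 : ¬((1:Fin 3) < 1) := by decide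
  have h12 : ((1:Fin 3) < 2) := by decide
  have h20 : ¬((2:Fin 3) < 0) := by decide
  have h21 : ¬((2:Fin 3) < 1) := by decide
  have h22 : ¬((2:Fin 3) < 2) := by decide
  simp only [h00, h01, h02, h10, h11, h12, h20, h21, h22, false_and, true_and,
    if_false, if_true]
  split_ifs <;> norm_num

lemma levelMove_eq_iff {n : ℕ} (i j : Fin 3) (u v : Fin n → Fin 3) :
    levelMove i j v = u ↔ v = levelMove i j u := by
  constructor
  · rintro rfl; rw [levelMove_invol]
  · rintro rfl; rw [levelMove_invol]

lemma adjMat_mulVec (n : ℕ) (w : (Fin n → Fin 3) → ℝ) (u : Fin n → Fin 3) :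
    (adjMat 3 n).mulVec w u =
      w (levelMove 0 1 u) + w (levelMove 0 2 u) + w (levelMove 1 2 u) := by
  classical
  unfold Matrix.mulVec dotProduct
  simp only [adjMat_apply, add_mul, Finset.sum_add_distrib, levelMove_eq_iff,
    ite_mul, one_mul, zero_mul, Finset.sum_ite_eq' Finset.univ, Finset.mem_univ, if_true]

lemma spectrum_eq_hasEv (n : ℕ) :
    spectrum ℝ (adjMat 3 n) = {lam | HasEv n lam} := by
  classical
  ext lam
  rw [spectrum.mem_iff]
  rw [Matrix.isUnit_iff_isUnit_det, isUnit_iff_ne_zero, not_not,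
    ← Matrix.exists_mulVec_eq_zero_iff]
  constructor
  · rintro ⟨v, hv, hveq⟩
    refine ⟨v, hv, fun u => ?_⟩
    have := congrFun hveq u
    simp only [Matrix.sub_mulVec, Algebra.algebraMap_eq_smul_one (A := Matrix _ _ ℝ),
      Matrix.smul_mulVec, Matrix.one_mulVec, Pi.sub_apply, Pi.smul_apply,
      Pi.zero_apply, smul_eq_mul] at this
    rw [adjMat_mulVec] at this
    linarith
  · rintro ⟨w, hw, hweq⟩
    refine ⟨w, hw, ?_⟩
    funext u
    simp only [Matrix.sub_mulVec, Algebra.algebraMap_eq_smul_one (A := Matrix _ _ ℝ),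
      Matrix.smul_mulVec, Matrix.one_mulVec, Pi.sub_apply, Pi.smul_apply,
      Pi.zero_apply, smul_eq_mul]
    rw [adjMat_mulVec]
    have := hweq u
    linarith

section ConsLemmas
variable {n : ℕ} (u : Fin n → Fin 3)

lemma lm01_c0 : levelMove 0 1 (Fin.cons 0 u) = Fin.cons 1 u := by
  rw [levelMove_cons]; simp
lemma lm01_c1 : levelMove 0 1 (Fin.cons 1 u) = Fin.cons 0 u := by
  rw [levelMove_cons]; simp
lemma lm01_c2 : levelMove 0 1 (Fin.cons 2 u) = Fin.cons 2 (levelMove 0 1 u) := by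
  rw [levelMove_cons]; simp
lemma lm02_c0 : levelMove 0 2 (Fin.cons 0 u) = Fin.cons 2 u := by
  rw [levelMove_cons]; simp
lemma lm02_c1 : levelMove 0 2 (Fin.cons 1 u) = Fin.cons 1 (levelMove 0 2 u) := by
  rw [levelMove_cons]; simp
lemma lm02_c2 : levelMove 0 2 (Fin.cons 2 u) = Fin.cons 0 u := by
  rw [levelMove_cons]; simp
lemma lm12_c0 : levelMove 1 2 (Fin.cons 0 u) = Fin.cons 0 (levelMove 1 2 u) := by
  rw [levelMove_cons]; simp
lemma lm12_c1 : levelMove 1 2 (Fin.cons 1 u) = Fin.cons 2 u := by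
  rw [levelMove_cons]; simp
lemma lm12_c2 : levelMove 1 2 (Fin.cons 2 u) = Fin.cons 1 u := by
  rw [levelMove_cons]; simp

end ConsLemmas

lemma fin3_cases (x : Fin 3) : x = 0 ∨ x = 1 ∨ x = 2 := by omega

lemma cons_surj {n : ℕ} (u : Fin (n+1) → Fin 3) : ∃ x t, u = Fin.cons x t :=
  ⟨u 0, Fin.tail u, (Fin.cons_self_tail u).symm⟩

lemma hasEv_three (n : ℕ) : HasEv n 3 := by
  refine ⟨fun _ => 1, fun h => one_ne_zero (congrFun h (fun _ => 0)), fun u => by norm_num⟩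

lemma hasEv_zero (n : ℕ) : HasEv (n+1) 0 := by
  refine ⟨fun u => (![(1:ℝ), -1, 0]) (u 0), ?_, ?_⟩
  · intro h
    have := congrFun h (Fin.cons 0 (fun _ => 0))
    simp at this
  · intro u
    obtain ⟨x, t, rfl⟩ := cons_surj u
    rcases fin3_cases x with rfl | rfl | rfl
    · rw [lm01_c0, lm02_c0, lm12_c0]; simp
    · rw [lm01_c1, lm02_c1, lm12_c1]; simp
    · rw [lm01_c2, lm02_c2, lm12_c2]; simp

lemma hasEv_neg2 (n : ℕ) : HasEv (n+2) (-2) := by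
  classical
  set ψ : Fin 3 → Fin 3 → ℝ := ![![0,1,-1],![-1,0,1],![1,-1,0]] with hψ
  refine ⟨fun u => ψ (u 0) (u 1), ?_, ?_⟩
  · intro h
    have := congrFun h (Fin.cons 0 (Fin.cons 1 (fun _ => 0)))
    simp [hψ] at this
  · intro u
    obtain ⟨x, u', rfl⟩ := cons_surj u
    obtain ⟨y, t, rfl⟩ := cons_surj u'
    rcases fin3_cases x with rfl | rfl | rfl <;>
      [rw [lm01_c0, lm02_c0, lm12_c0]; rw [lm01_c1, lm02_c1, lm12_c1];
       rw [lm01_c2, lm02_c2, lm12_c2]] <;>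
    rcases fin3_cases y with rfl | rfl | rfl <;>
      simp [lm01_c0, lm01_c1, lm01_c2, lm02_c0, lm02_c1, lm02_c2,
        lm12_c0, lm12_c1, lm12_c2, hψ] <;> norm_num

def dd {n : ℕ} : Fin 3 → (Fin n → Fin 3) → (Fin n → Fin 3) := fun x =>
  if x = 0 then levelMove 1 2 else if x = 1 then levelMove 0 2 else levelMove 0 1

lemma dd0 {n : ℕ} : (dd 0 : (Fin n → Fin 3) → _) = levelMove 1 2 := by simp [dd]
lemma dd1 {n : ℕ} : (dd 1 : (Fin n → Fin 3) → _) = levelMove 0 2 := by simp [dd]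
lemma dd2 {n : ℕ} : (dd 2 : (Fin n → Fin 3) → _) = levelMove 0 1 := by simp [dd]

lemma hasEv_up {n : ℕ} {lam : ℝ} (h0 : lam ≠ 0) (h2 : lam ≠ -2)
    (h : HasEv n (lam^2 - lam - 3)) : HasEv (n+1) lam := by
  obtain ⟨v, hv, hveq⟩ := h
  have hvpt : ∃ t, v t ≠ 0 := by
    by_contra hc
    push_neg at hc
    exact hv (funext fun t => hc t)
  obtain ⟨t0, ht0⟩ := hvpt
  refine ⟨fun u => (1+lam) * v (Fin.tail u) + v (dd (u 0) (Fin.tail u)), ?_, ?_⟩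
  · intro hzero
    have key : ∀ t : Fin n → Fin 3, (1+lam) * v t + v (levelMove 1 2 t) = 0 := by
      intro t
      have := congrFun hzero (Fin.cons 0 t)
      simpa [Fin.tail_cons, dd0] using this
    have k1 := key t0
    have k2 := key (levelMove 1 2 t0)
    rw [levelMove_invol] at k2
    have hmul : lam * (lam + 2) * v t0 = 0 := by linear_combination (1+lam) * k1 - k2
    rcases mul_eq_zero.mp hmul with hml | hvz
    · rcases mul_eq_zero.mp hml with h | h
      · exact h0 h
      · exact h2 (by linarith)
    · exact ht0 hvz
  · intro u
    obtain ⟨x, t, rfl⟩ := cons_surj u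
    rcases fin3_cases x with rfl | rfl | rfl
    · rw [lm01_c0, lm02_c0, lm12_c0]
      simp only [Fin.tail_cons, Fin.cons_zero, dd0, dd1, dd2]
      rw [levelMove_invol]
      linear_combination hveq t
    · rw [lm01_c1, lm02_c1, lm12_c1]
      simp only [Fin.tail_cons, Fin.cons_zero, dd0, dd1, dd2]
      rw [levelMove_invol]
      linear_combination hveq t
    · rw [lm01_c2, lm02_c2, lm12_c2]
      simp only [Fin.tail_cons, Fin.cons_zero, dd0, dd1, dd2]
      rw [levelMove_invol]
      linear_combination hveq t

lemma hasEv_down {n : ℕ} {lam : ℝ} (h : HasEv (n+1) lam) :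
    lam = 0 ∨ HasEv n (lam^2 - lam - 3) := by
  classical
  obtain ⟨w, hw, hweq⟩ := h
  have E0 : ∀ t, w (Fin.cons 1 t) + w (Fin.cons 2 t) + w (Fin.cons 0 (levelMove 1 2 t))
      = lam * w (Fin.cons 0 t) := by
    intro t
    have := hweq (Fin.cons 0 t)
    rwa [lm01_c0, lm02_c0, lm12_c0] at this
  have E1 : ∀ t, w (Fin.cons 0 t) + w (Fin.cons 1 (levelMove 0 2 t)) + w (Fin.cons 2 t)
      = lam * w (Fin.cons 1 t) := by
    intro t
    have := hweq (Fin.cons 1 t)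
    rwa [lm01_c1, lm02_c1, lm12_c1] at this
  have E2 : ∀ t, w (Fin.cons 2 (levelMove 0 1 t)) + w (Fin.cons 0 t) + w (Fin.cons 1 t)
      = lam * w (Fin.cons 2 t) := by
    intro t
    have := hweq (Fin.cons 2 t)
    rwa [lm01_c2, lm02_c2, lm12_c2] at this
  have E0s : ∀ t, w (Fin.cons 1 (levelMove 1 2 t)) + w (Fin.cons 2 (levelMove 1 2 t))
      + w (Fin.cons 0 t) = lam * w (Fin.cons 0 (levelMove 1 2 t)) := by
    intro t; have := E0 (levelMove 1 2 t); rwa [levelMove_invol] at this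
  have E1s : ∀ t, w (Fin.cons 0 (levelMove 0 2 t)) + w (Fin.cons 1 t)
      + w (Fin.cons 2 (levelMove 0 2 t)) = lam * w (Fin.cons 1 (levelMove 0 2 t)) := by
    intro t; have := E1 (levelMove 0 2 t); rwa [levelMove_invol] at this
  have E2s : ∀ t, w (Fin.cons 2 t) + w (Fin.cons 0 (levelMove 0 1 t))
      + w (Fin.cons 1 (levelMove 0 1 t)) = lam * w (Fin.cons 2 (levelMove 0 1 t)) := by
    intro t; have := E2 (levelMove 0 1 t); rwa [levelMove_invol] at this
  by_cases hv0 : ∀ t, w (Fin.cons 0 t) + w (Fin.cons 1 t) + w (Fin.cons 2 t) = 0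
  · -- degenerate case : lam = 0 or lam = -2
    have hpt : ∃ u, w u ≠ 0 := by
      by_contra hc; push_neg at hc; exact hw (funext fun u => hc u)
    obtain ⟨u, hu⟩ := hpt
    obtain ⟨x, t, rfl⟩ := cons_surj u
    have key : lam * (lam + 2) * w (Fin.cons x t) = 0 := by
      rcases fin3_cases x with rfl | rfl | rfl
      · have hp : w (Fin.cons 0 (levelMove 1 2 t)) = (lam+1) * w (Fin.cons 0 t) := by
          linear_combination E0 t - hv0 t
        have hq : w (Fin.cons 0 t) = (lam+1) * w (Fin.cons 0 (levelMove 1 2 t)) := by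
          linear_combination E0s t - hv0 (levelMove 1 2 t)
        linear_combination - hq - (lam+1) * hp
      · have hp : w (Fin.cons 1 (levelMove 0 2 t)) = (lam+1) * w (Fin.cons 1 t) := by
          linear_combination E1 t - hv0 t
        have hq : w (Fin.cons 1 t) = (lam+1) * w (Fin.cons 1 (levelMove 0 2 t)) := by
          linear_combination E1s t - hv0 (levelMove 0 2 t)
        linear_combination - hq - (lam+1) * hp
      · have hp : w (Fin.cons 2 (levelMove 0 1 t)) = (lam+1) * w (Fin.cons 2 t) := by
          linear_combination E2 t - hv0 t
        have hq : w (Fin.cons 2 t) = (lam+1) * w (Fin.cons 2 (levelMove 0 1 t)) := by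
          linear_combination E2s t - hv0 (levelMove 0 1 t)
        linear_combination - hq - (lam+1) * hp
    rcases mul_eq_zero.mp key with hml | hvz
    · rcases mul_eq_zero.mp hml with h | h
      · exact Or.inl h
      · have hlam : lam = -2 := by linarith
        right
        have : lam^2 - lam - 3 = 3 := by rw [hlam]; norm_num
        rw [this]
        exact hasEv_three n
    · exact absurd hvz hu
  · -- main case : v ≠ 0 is an eigenvector for f(lam)
    right
    push_neg at hv0
    refine ⟨fun t => w (Fin.cons 0 t) + w (Fin.cons 1 t) + w (Fin.cons 2 t), ?_, ?_⟩
    · intro hzero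
      obtain ⟨t, ht⟩ := hv0
      exact ht (by simpa using congrFun hzero t)
    · intro t
      show (w (Fin.cons 0 (levelMove 0 1 t)) + w (Fin.cons 1 (levelMove 0 1 t))
          + w (Fin.cons 2 (levelMove 0 1 t)))
        + (w (Fin.cons 0 (levelMove 0 2 t)) + w (Fin.cons 1 (levelMove 0 2 t))
          + w (Fin.cons 2 (levelMove 0 2 t)))
        + (w (Fin.cons 0 (levelMove 1 2 t)) + w (Fin.cons 1 (levelMove 1 2 t))
          + w (Fin.cons 2 (levelMove 1 2 t)))
        = (lam^2 - lam - 3) * (w (Fin.cons 0 t) + w (Fin.cons 1 t) + w (Fin.cons 2 t))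
      linear_combination E0s t + (lam+1) * E0 t + E1s t + (lam+1) * E1 t
        + E2s t + (lam+1) * E2 t

lemma lm_zero (i j : Fin 3) (u : Fin 0 → Fin 3) : levelMove i j u = u :=
  funext fun i => Fin.elim0 i

lemma hasEv_level0 {lam : ℝ} : HasEv 0 lam ↔ lam = 3 := by
  constructor
  · rintro ⟨w, hw, hweq⟩
    set t : Fin 0 → Fin 3 := fun i => Fin.elim0 i with ht
    have h := hweq t
    rw [lm_zero, lm_zero, lm_zero] at h
    have hwt : w t ≠ 0 := by
      intro hz
      apply hw
      funext u
      have : u = t := funext fun i => Fin.elim0 i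
      rw [this]; simpa using hz
    have : 3 * w t = lam * w t := by linarith
    by_contra hne
    apply hwt
    have := mul_right_cancel₀ hwt this  -- 3 = lam
    exact absurd this.symm hne
  · rintro rfl; exact hasEv_three 0

lemma not_hasEv_one_neg2 : ¬ HasEv 1 (-2) := by
  rintro ⟨w, hw, hweq⟩
  set t : Fin 0 → Fin 3 := fun i => Fin.elim0 i with ht
  have A0 := hweq (Fin.cons 0 t)
  have A1 := hweq (Fin.cons 1 t)
  have A2 := hweq (Fin.cons 2 t)
  rw [lm01_c0, lm02_c0, lm12_c0, lm_zero] at A0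
  rw [lm01_c1, lm02_c1, lm12_c1, lm_zero] at A1
  rw [lm01_c2, lm02_c2, lm12_c2, lm_zero] at A2
  apply hw
  funext u
  obtain ⟨x, t', rfl⟩ := cons_surj u
  have htt : t' = t := funext fun i => Fin.elim0 i
  rw [htt]
  rcases fin3_cases x with rfl | rfl | rfl <;> [skip; skip; skip] <;>
    show w _ = 0 <;> linarith

lemma hasEv_mem_Icc : ∀ n : ℕ, ∀ lam : ℝ, HasEv n lam → lam ∈ Set.Icc (-2:ℝ) 3 := by
  intro n
  induction n with
  | zero => intro lam h; rw [hasEv_level0] at h; rw [h]; constructor <;> norm_num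
  | succ m ih =>
    intro lam h
    rcases hasEv_down h with rfl | h'
    · constructor <;> norm_num
    · have := ih _ h'
      obtain ⟨h1, h2⟩ := this
      constructor <;> nlinarith

lemma spec1 : {lam : ℝ | HasEv 1 lam} = {0, 3} := by
  ext lam
  simp only [Set.mem_setOf_eq, Set.mem_insert_iff, Set.mem_singleton_iff]
  constructor
  · intro h
    rcases hasEv_down h with rfl | h'
    · exact Or.inl rfl
    · rw [hasEv_level0] at h'
      have : (lam - 3) * (lam + 2) = 0 := by linear_combination h'
      rcases mul_eq_zero.mp this with h3 | h4
      · exact Or.inr (by linarith)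
      · exfalso
        have : lam = -2 := by linarith
        rw [this] at h
        exact not_hasEv_one_neg2 h
  · rintro (rfl | rfl)
    · exact hasEv_zero 0
    · exact hasEv_three 1

lemma spec_rec (m : ℕ) : {lam : ℝ | HasEv (m+2) lam}
    = {0} ∪ (fun x : ℝ => x^2 - x - 3) ⁻¹' {lam | HasEv (m+1) lam} := by
  ext lam
  simp only [Set.mem_setOf_eq, Set.mem_union, Set.mem_singleton_iff, Set.mem_preimage]
  constructor
  · intro h
    exact hasEv_down h
  · rintro (rfl | h)
    · exact hasEv_zero (m+1)
    · by_cases h0 : lam = 0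
      · exfalso
        rw [h0] at h
        norm_num at h
        have hic := hasEv_mem_Icc _ _ h
        rw [Set.mem_Icc] at hic
        linarith [hic.1]
      · by_cases h2 : lam = -2
        · rw [h2]; exact hasEv_neg2 m
        · exact hasEv_up h0 h2 h

lemma preimage_structure {S : Set ℝ} (hS : S ⊆ Set.Icc (-2:ℝ) 3) :
    (fun x : ℝ => x^2 - x - 3) ⁻¹' S =
      (fun y : ℝ => (1 + Real.sqrt (13 + 4*y))/2) '' S ∪
      (fun y : ℝ => (1 - Real.sqrt (13 + 4*y))/2) '' S := by
  ext x
  simp only [Set.mem_preimage, Set.mem_union, Set.mem_image]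
  constructor
  · intro hy
    set y := x^2 - x - 3 with hydef
    have hy2 : -2 ≤ y := (hS hy).1
    have hs : Real.sqrt (13 + 4*y) ^ 2 = 13 + 4*y :=
      Real.sq_sqrt (by linarith)
    have hsq : Real.sqrt (13 + 4*y) ^ 2 = (2*x - 1)^2 := by
      rw [hs, hydef]; ring
    rcases sq_eq_sq_iff_eq_or_eq_neg.mp hsq with h | h
    · exact Or.inl ⟨y, hy, by rw [h]; ring⟩
    · exact Or.inr ⟨y, hy, by rw [h]; ring⟩
  · rintro (⟨y, hy, rfl⟩ | ⟨y, hy, rfl⟩)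
    · have hy2 : -2 ≤ y := (hS hy).1
      have hs : Real.sqrt (13 + 4*y) ^ 2 = 13 + 4*y :=
        Real.sq_sqrt (by linarith)
      have : ((1 + Real.sqrt (13 + 4*y))/2)^2 - (1 + Real.sqrt (13 + 4*y))/2 - 3 = y := by
        linear_combination hs / 4
      rwa [this]
    · have hy2 : -2 ≤ y := (hS hy).1
      have hs : Real.sqrt (13 + 4*y) ^ 2 = 13 + 4*y :=
        Real.sq_sqrt (by linarith)
      have : ((1 - Real.sqrt (13 + 4*y))/2)^2 - (1 - Real.sqrt (13 + 4*y))/2 - 3 = y := by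
        linear_combination hs / 4
      rwa [this]

lemma preimage_count {S : Set ℝ} (hS : S ⊆ Set.Icc (-2:ℝ) 3) (hfin : S.Finite) :
    ((fun x : ℝ => x^2 - x - 3) ⁻¹' S).Finite ∧
      ((fun x : ℝ => x^2 - x - 3) ⁻¹' S).ncard = 2 * S.ncard := by
  have hsqrtpos : ∀ y ∈ S, 0 < Real.sqrt (13 + 4*y) := by
    intro y hy
    have : -2 ≤ y := (hS hy).1
    exact Real.sqrt_pos.mpr (by linarith)
  have hsq : ∀ y ∈ S, Real.sqrt (13 + 4*y) ^ 2 = 13 + 4*y := by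
    intro y hy
    have : -2 ≤ y := (hS hy).1
    exact Real.sq_sqrt (by linarith)
  have hinjp : Set.InjOn (fun y : ℝ => (1 + Real.sqrt (13 + 4*y))/2) S := by
    intro y1 h1 y2 h2 h
    have hss : Real.sqrt (13 + 4*y1) = Real.sqrt (13 + 4*y2) := by
      field_simp at h; linarith
    have := hsq y1 h1
    rw [hss, hsq y2 h2] at this
    linarith
  have hinjm : Set.InjOn (fun y : ℝ => (1 - Real.sqrt (13 + 4*y))/2) S := by
    intro y1 h1 y2 h2 h
    have hss : Real.sqrt (13 + 4*y1) = Real.sqrt (13 + 4*y2) := by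
      field_simp at h; linarith
    have := hsq y1 h1
    rw [hss, hsq y2 h2] at this
    linarith
  have hdisj : Disjoint ((fun y : ℝ => (1 + Real.sqrt (13 + 4*y))/2) '' S)
      ((fun y : ℝ => (1 - Real.sqrt (13 + 4*y))/2) '' S) := by
    rw [Set.disjoint_left]
    rintro z ⟨y1, h1, rfl⟩ ⟨y2, h2, h⟩
    have p1 := hsqrtpos y1 h1
    have p2 := hsqrtpos y2 h2
    have : (1 - Real.sqrt (13 + 4*y2))/2 < 1/2 := by linarith
    have h' : (1 + Real.sqrt (13 + 4*y1))/2 > 1/2 := by linarith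
    simp only [] at h
    linarith
  rw [preimage_structure hS]
  refine ⟨(hfin.image _).union (hfin.image _), ?_⟩
  rw [Set.ncard_union_eq hdisj (hfin.image _) (hfin.image _),
    Set.ncard_image_of_injOn hinjp, Set.ncard_image_of_injOn hinjm]
  ring

lemma main_count : ∀ m : ℕ, ({lam : ℝ | HasEv (m+1) lam}).Finite ∧
    ({lam : ℝ | HasEv (m+1) lam}).ncard = 3 * 2^m - 1 := by
  intro m
  induction m with
  | zero =>
    rw [spec1]
    refine ⟨(Set.finite_singleton _).insert _, ?_⟩
    rw [Set.ncard_pair (by norm_num : (0:ℝ) ≠ 3)]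
    norm_num
  | succ k ih =>
    obtain ⟨hfin, hcard⟩ := ih
    have hS : {lam : ℝ | HasEv (k+1) lam} ⊆ Set.Icc (-2:ℝ) 3 :=
      fun lam h => hasEv_mem_Icc _ _ h
    obtain ⟨hfin', hcard'⟩ := preimage_count hS hfin
    have h0 : (0:ℝ) ∉ (fun x : ℝ => x^2 - x - 3) ⁻¹' {lam : ℝ | HasEv (k+1) lam} := by
      intro hc
      simp only [Set.mem_preimage, Set.mem_setOf_eq] at hc
      norm_num at hc
      have := hasEv_mem_Icc _ _ hc
      rw [Set.mem_Icc] at this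
      linarith [this.1]
    rw [spec_rec k, Set.singleton_union]
    constructor
    · exact hfin'.insert 0
    · rw [Set.ncard_insert_of_notMem h0 hfin', hcard', hcard]
      have h2 : 1 ≤ 2^k := Nat.one_le_two_pow
      rw [pow_succ]
      omega

/-- For `H(3)` and every `n ≥ 1`, the set of real eigenvalues of the
adjacency matrix `T_n` of the level-`n` Schreier graph has exactly `3·2^(n-1) - 1`
elements. -/
theorem hanoi3_spectrum_card (n : ℕ) (hn : 1 ≤ n) :
    (spectrum ℝ (adjMat 3 n)).ncard = 3 * 2 ^ (n - 1) - 1 := by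
  obtain ⟨m, rfl⟩ : ∃ m, n = m + 1 := ⟨n - 1, by omega⟩
  rw [spectrum_eq_hasEv]
  simpa using (main_count m).2
end

section
/- For the Hanoi Towers group H(3), the spectral gap δ(n) = 1 − λ(n) of the level-n Schreier graph, where λ(n) is the largest eigenvalue different from 1 of the Markov operator M_n = (1/3)T_n, decays exponentially: there exist constants 0 < c₁ ≤ c₂ < 1 and C₁, C₂ > 0 such that C₁·c₁^n ≤ δ(n) ≤ C₂·c₂^n for all n ≥ 1. -/
namespace HanoiAux


lemma ofFn_levelMove {k n : ℕ} (i j : Fin k) (u : Fin n → Fin k) :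
    List.ofFn (levelMove i j u) = hMove i j (List.ofFn u) := by
  apply List.ext_get
  · simp [hMove_length]
  · intro m h1 h2
    simp [levelMove]

lemma levelMove_invol {k n : ℕ} (i j : Fin k) (u : Fin n → Fin k) :
    levelMove i j (levelMove i j u) = u := by
  funext m
  simp [levelMove, ofFn_levelMove, hMove_involutive]

lemma levelMove_cons {k n : ℕ} (i j : Fin k) (x : Fin k) (w : Fin n → Fin k) :
    levelMove i j (Fin.cons x w) =
      if x = i then Fin.cons j w else if x = j then Fin.cons i w
      else Fin.cons x (levelMove i j w) := by
  have hofn : List.ofFn (Fin.cons x w : Fin (n+1) → Fin k) = x :: List.ofFn w := by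
    rw [List.ofFn_succ]; simp
  split_ifs with h1 h2
  · funext m
    induction m using Fin.cases with
    | zero => simp [levelMove, hofn, hMove, h1]
    | succ m' => simp [levelMove, hofn, hMove, h1]
  · funext m
    by_cases hji : j = i
    · induction m using Fin.cases with
      | zero => simp [levelMove, hofn, hMove, h1, h2, hji]
      | succ m' => simp [levelMove, hofn, hMove, h1, h2, hji]
    · induction m using Fin.cases with
      | zero => simp [levelMove, hofn, hMove, h1, h2, hji]
      | succ m' => simp [levelMove, hofn, hMove, h1, h2, hji]
  · funext m
    induction m using Fin.cases with
    | zero => simp [levelMove, hofn, hMove, h1, h2]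
    | succ m' => simp [levelMove, ofFn_levelMove, hofn, hMove, h1, h2]



abbrev V (n : ℕ) := Fin n → Fin 3

noncomputable def mvEquiv {n : ℕ} (i j : Fin 3) : Equiv.Perm (V n) :=
  Function.Involutive.toPerm (levelMove i j) (levelMove_invol i j)

noncomputable def Sq {n : ℕ} (f : V n → ℝ) : ℝ := ∑ u, (f u)^2

noncomputable def en {n : ℕ} (i j : Fin 3) (f : V n → ℝ) : ℝ :=
  ∑ u, (f (levelMove i j u) - f u)^2

noncomputable def En {n : ℕ} (f : V n → ℝ) : ℝ := en 0 1 f + en 0 2 f + en 1 2 f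

noncomputable def Dd {n : ℕ} (f g : V n → ℝ) : ℝ := ∑ w, (f w - g w)^2

def cmp {n : ℕ} (x : Fin 3) (f : V (n+1) → ℝ) : V n → ℝ := fun w => f (Fin.cons x w)

noncomputable def φ : Fin 3 → ℝ := ![1, -1, 0]

noncomputable def tf {m : ℕ} : V (m+1) → ℝ := fun u => φ (u (Fin.last m))

noncomputable def Mn (n : ℕ) : Matrix (V n) (V n) ℝ := ((1 : ℝ) / 3) • adjMat 3 n


/-- `levelMove` as a permutation. -/
lemma Sq_nonneg {n : ℕ} (f : V n → ℝ) : 0 ≤ Sq f :=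
  Finset.sum_nonneg fun _ _ => sq_nonneg _

lemma en_nonneg {n : ℕ} (i j : Fin 3) (f : V n → ℝ) : 0 ≤ en i j f :=
  Finset.sum_nonneg fun _ _ => sq_nonneg _

lemma En_nonneg {n : ℕ} (f : V n → ℝ) : 0 ≤ En f := by
  have := en_nonneg (n := n) 0 1 f; have := en_nonneg (n := n) 0 2 f
  have := en_nonneg (n := n) 1 2 f; unfold En; linarith

lemma sum_comp_mv {n : ℕ} (i j : Fin 3) (f : V n → ℝ) :
    ∑ u, f (levelMove i j u) = ∑ u, f u :=
  Equiv.sum_comp (mvEquiv i j) f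

/-- splitting a sum over `V (n+1)` along the first coordinate -/
lemma sum_cons_split {n : ℕ} (G : V (n+1) → ℝ) :
    ∑ u, G u = ∑ x : Fin 3, ∑ w : V n, G (Fin.cons x w) := by
  rw [← Equiv.sum_comp (Fin.consEquiv fun _ => Fin 3) G, Fintype.sum_prod_type]
  rfl

lemma Dd_nonneg {n : ℕ} (f g : V n → ℝ) : 0 ≤ Dd f g :=
  Finset.sum_nonneg fun _ _ => sq_nonneg _

lemma en_cons (i j : Fin 3) (hij : i ≠ j) (z : Fin 3) (hzi : z ≠ i) (hzj : z ≠ j)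
    {n : ℕ} (f : V (n+1) → ℝ) :
    en i j f = 2 * Dd (cmp i f) (cmp j f) + en i j (cmp z f) := by
  have key : ∀ x : Fin 3, ∑ w : V n, (f (levelMove i j (Fin.cons x w)) - f (Fin.cons x w))^2
      = if x = i then Dd (cmp j f) (cmp i f) else if x = j then Dd (cmp i f) (cmp j f)
        else en i j (cmp x f) := by
    intro x
    split_ifs with h1 h2
    · subst h1; apply Finset.sum_congr rfl; intro w _
      rw [levelMove_cons]; simp [hij.symm]; rfl
    · subst h2; apply Finset.sum_congr rfl; intro w _
      rw [levelMove_cons]; simp [h1]; rfl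
    · apply Finset.sum_congr rfl; intro w _
      rw [levelMove_cons]; simp [h1, h2]; rfl
  rw [en, sum_cons_split]
  have huniv : (Finset.univ : Finset (Fin 3)) = {i, j, z} := by
    apply Finset.eq_of_subset_of_card_le
    · intro x _; fin_cases i <;> fin_cases j <;> fin_cases z <;> fin_cases x <;> simp_all
    · rw [Finset.card_insert_of_notMem (by simp [hij, Ne.symm hzi]),
        Finset.card_insert_of_notMem (by simp [Ne.symm hzj])]
      simp
  rw [huniv, Finset.sum_insert (by simp [hij, Ne.symm hzi]),
    Finset.sum_insert (by simp [Ne.symm hzj]), Finset.sum_singleton,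
    key i, key j, key z, if_pos rfl, if_neg (Ne.symm hij), if_pos rfl, if_neg hzi, if_neg hzj]
  have : Dd (cmp j f) (cmp i f) = Dd (cmp i f) (cmp j f) := by
    unfold Dd; apply Finset.sum_congr rfl; intro w _; ring
  rw [this]; ring




lemma en_le_four_Sq {n : ℕ} (i j : Fin 3) (h : V n → ℝ) : en i j h ≤ 4 * Sq h := by
  have key : en i j h ≤ 2 * (∑ u, (h (levelMove i j u))^2) + 2 * Sq h := by
    unfold en Sq
    rw [Finset.mul_sum, Finset.mul_sum, ← Finset.sum_add_distrib]
    exact Finset.sum_le_sum fun u _ => by nlinarith [sq_nonneg (h (levelMove i j u) + h u)]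
  have : (∑ u, (h (levelMove i j u))^2) = Sq h := sum_comp_mv i j (fun u => (h u)^2)
  rw [this] at key; linarith

lemma en_subadd {n : ℕ} (i j : Fin 3) (a b : V n → ℝ) :
    en i j (fun w => a w + b w) ≤ 2 * en i j a + 2 * en i j b := by
  unfold en
  rw [Finset.mul_sum, Finset.mul_sum, ← Finset.sum_add_distrib]
  refine Finset.sum_le_sum fun u _ => ?_
  show ((a (levelMove i j u) + b (levelMove i j u)) - (a u + b u))^2 ≤ _
  nlinarith [sq_nonneg ((a (levelMove i j u) - a u) - (b (levelMove i j u) - b u))]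

lemma Sq_sub_comb {n : ℕ} (a b c : V n → ℝ) :
    Sq (fun w => a w - (a w + b w + c w)/3) ≤ (2/9) * (Dd a b + Dd a c) := by
  unfold Sq Dd
  calc ∑ w, ((fun w => a w - (a w + b w + c w)/3) w)^2
      ≤ ∑ w, (2/9) * ((a w - b w)^2 + (a w - c w)^2) := by
        refine Finset.sum_le_sum fun w _ => ?_
        show (a w - (a w + b w + c w)/3)^2 ≤ _
        nlinarith [sq_nonneg ((a w - b w) - (a w - c w))]
    _ = (2/9) * (∑ w, (a w - b w)^2 + ∑ w, (a w - c w)^2) := by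
        rw [mul_add, Finset.mul_sum, Finset.mul_sum, ← Finset.sum_add_distrib]
        exact Finset.sum_congr rfl fun w _ => by ring

lemma Sq_le_two_two {n : ℕ} (a b : V n → ℝ) :
    Sq a ≤ 2 * Sq b + 2 * Sq (fun w => a w - b w) := by
  unfold Sq
  rw [Finset.mul_sum, Finset.mul_sum, ← Finset.sum_add_distrib]
  refine Finset.sum_le_sum fun u _ => ?_
  show (a u)^2 ≤ 2*(b u)^2 + 2*((a u - b u)^2)
  nlinarith [sq_nonneg (a u - 2 * b u)]

lemma Dd_symm {n : ℕ} (a b : V n → ℝ) : Dd a b = Dd b a := by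
  unfold Dd; exact Finset.sum_congr rfl fun w _ => by ring

lemma Sq_neg_sub {n : ℕ} (a b : V n → ℝ) :
    Sq (fun w => a w - b w) = Sq (fun w => b w - a w) := by
  unfold Sq; exact Finset.sum_congr rfl fun w _ => by ring

theorem poincare : ∀ (n : ℕ) (f : V n → ℝ), (∑ u, f u = 0) →
    3 * (1/144 : ℝ)^n * Sq f ≤ En f := by
  intro n
  induction n with
  | zero =>
    intro f hf
    have hall : ∀ u : V 0, f u = 0 := by
      intro u
      have hs : ∑ v : V 0, f v = f u := by
        apply Finset.sum_eq_single_of_mem u (Finset.mem_univ u)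
        intro b _ hb; exact absurd (Subsingleton.elim b u) hb
      rw [hs] at hf; exact hf
    have h0 : Sq f = 0 := by unfold Sq; simp [hall]
    rw [h0]; simpa using En_nonneg f
  | succ n ih =>
    intro f hf
    set F0 := cmp 0 f with hF0
    set F1 := cmp 1 f with hF1
    set F2 := cmp 2 f with hF2
    set wb : V n → ℝ := fun w => (F0 w + F1 w + F2 w)/3 with hwb
    set ε := En f with hε
    have hεnn : 0 ≤ ε := En_nonneg f
    have h01 : en 0 1 f = 2 * Dd F0 F1 + en 0 1 F2 :=
      en_cons 0 1 (by decide) 2 (by decide) (by decide) f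
    have h02 : en 0 2 f = 2 * Dd F0 F2 + en 0 2 F1 :=
      en_cons 0 2 (by decide) 1 (by decide) (by decide) f
    have h12 : en 1 2 f = 2 * Dd F1 F2 + en 1 2 F0 :=
      en_cons 1 2 (by decide) 0 (by decide) (by decide) f
    have hEsum : ε = 2 * Dd F0 F1 + en 0 1 F2 + (2 * Dd F0 F2 + en 0 2 F1)
        + (2 * Dd F1 F2 + en 1 2 F0) := by
      rw [hε]; unfold En; rw [h01, h02, h12]
    have hD01 : Dd F0 F1 ≤ ε/2 := by
      have := en_nonneg 0 1 F2; have := en_nonneg 0 2 F1; have := en_nonneg 1 2 F0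
      have := Dd_nonneg F0 F2; have := Dd_nonneg F1 F2; linarith
    have hD02 : Dd F0 F2 ≤ ε/2 := by
      have := en_nonneg 0 1 F2; have := en_nonneg 0 2 F1; have := en_nonneg 1 2 F0
      have := Dd_nonneg F0 F1; have := Dd_nonneg F1 F2; linarith
    have hD12 : Dd F1 F2 ≤ ε/2 := by
      have := en_nonneg 0 1 F2; have := en_nonneg 0 2 F1; have := en_nonneg 1 2 F0
      have := Dd_nonneg F0 F1; have := Dd_nonneg F0 F2; linarith
    -- deviation bounds
    have hdev0 : Sq (fun w => F0 w - wb w) ≤ (2/9) * ε := by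
      have := Sq_sub_comb F0 F1 F2
      have heq : wb = fun w => (F0 w + F1 w + F2 w)/3 := hwb
      calc Sq (fun w => F0 w - wb w) ≤ (2/9) * (Dd F0 F1 + Dd F0 F2) := by
            rw [heq]; exact Sq_sub_comb F0 F1 F2
        _ ≤ (2/9) * ε := by linarith
    have hdev1 : Sq (fun w => F1 w - wb w) ≤ (2/9) * ε := by
      calc Sq (fun w => F1 w - wb w) ≤ (2/9) * (Dd F1 F0 + Dd F1 F2) := by
            have := Sq_sub_comb F1 F0 F2
            have : (fun w => F1 w - wb w) = fun w => F1 w - (F1 w + F0 w + F2 w)/3 := by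
              funext w; rw [hwb]; ring
            rw [this]; exact Sq_sub_comb F1 F0 F2
        _ ≤ (2/9) * ε := by rw [Dd_symm F1 F0]; linarith
    have hdev2 : Sq (fun w => F2 w - wb w) ≤ (2/9) * ε := by
      calc Sq (fun w => F2 w - wb w) ≤ (2/9) * (Dd F2 F0 + Dd F2 F1) := by
            have : (fun w => F2 w - wb w) = fun w => F2 w - (F2 w + F0 w + F1 w)/3 := by
              funext w; rw [hwb]; ring
            rw [this]; exact Sq_sub_comb F2 F0 F1
        _ ≤ (2/9) * ε := by rw [Dd_symm F2 F0, Dd_symm F2 F1]; linarith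
    -- energies of the mean
    have hen_wb : ∀ (i j : Fin 3) (z : Fin 3), en i j (cmp z f) ≤ ε →
        Sq (fun w => cmp z f w - wb w) ≤ (2/9)*ε → en i j wb ≤ (34/9) * ε := by
      intro i j z henz hdev
      calc en i j wb ≤ 2 * en i j (cmp z f) + 2 * en i j (fun w => wb w - cmp z f w) := by
            have hsa := en_subadd i j (cmp z f) (fun w => wb w - cmp z f w)
            have heq : (fun w => cmp z f w + (fun w' => wb w' - cmp z f w') w) = wb := by
              funext w; show cmp z f w + (wb w - cmp z f w) = wb w; ring
            rwa [heq] at hsa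
        _ ≤ 2 * ε + 2 * (4 * Sq (fun w => wb w - cmp z f w)) := by
            have := en_le_four_Sq i j (fun w => wb w - cmp z f w); linarith
        _ ≤ 2 * ε + 8 * ((2/9)*ε) := by
            rw [Sq_neg_sub]
            have : Sq (fun w => cmp z f w - wb w) ≤ (2/9)*ε := hdev
            linarith
        _ = (34/9) * ε := by ring
    have he01 : en 0 1 F2 ≤ ε := by
      have := Dd_nonneg F0 F1; have := Dd_nonneg F0 F2; have := Dd_nonneg F1 F2
      have := en_nonneg 0 2 F1; have := en_nonneg 1 2 F0; linarith
    have he02 : en 0 2 F1 ≤ ε := by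
      have := Dd_nonneg F0 F1; have := Dd_nonneg F0 F2; have := Dd_nonneg F1 F2
      have := en_nonneg 0 1 F2; have := en_nonneg 1 2 F0; linarith
    have he12 : en 1 2 F0 ≤ ε := by
      have := Dd_nonneg F0 F1; have := Dd_nonneg F0 F2; have := Dd_nonneg F1 F2
      have := en_nonneg 0 1 F2; have := en_nonneg 0 2 F1; linarith
    have hEnwb : En wb ≤ 12 * ε := by
      have e1 := hen_wb 0 1 2 he01 hdev2
      have e2 := hen_wb 0 2 1 he02 hdev1
      have e3 := hen_wb 1 2 0 he12 hdev0
      unfold En; linarith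
    -- mean of wb is zero
    have hmean : ∑ w, wb w = 0 := by
      have hsplit := sum_cons_split f
      rw [hf] at hsplit
      rw [Fin.sum_univ_three] at hsplit
      have hthis : ∑ w, wb w = ((∑ w, F0 w) + (∑ w, F1 w) + (∑ w, F2 w))/3 := by
        rw [hwb, ← Finset.sum_add_distrib, ← Finset.sum_add_distrib, ← Finset.sum_div]
      have e0 : ∑ w, F0 w = ∑ w : V n, f (Fin.cons 0 w) := rfl
      have e1 : ∑ w, F1 w = ∑ w : V n, f (Fin.cons 1 w) := rfl
      have e2 : ∑ w, F2 w = ∑ w : V n, f (Fin.cons 2 w) := rfl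
      rw [hthis, e0, e1, e2, ← hsplit]
      norm_num
    have hih := ih wb hmean
    -- norm bound
    have hSqf : Sq f = Sq F0 + Sq F1 + Sq F2 := by
      unfold Sq; rw [sum_cons_split (fun u => (f u)^2), Fin.sum_univ_three]; rfl
    have hb0 : Sq F0 ≤ 2 * Sq wb + 2 * ((2/9)*ε) := by
      have := Sq_le_two_two F0 wb; linarith
    have hb1 : Sq F1 ≤ 2 * Sq wb + 2 * ((2/9)*ε) := by
      have := Sq_le_two_two F1 wb; linarith
    have hb2 : Sq F2 ≤ 2 * Sq wb + 2 * ((2/9)*ε) := by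
      have := Sq_le_two_two F2 wb; linarith
    have hSqf_le : Sq f ≤ 6 * Sq wb + (4/3) * ε := by rw [hSqf]; linarith
    -- conclude
    have hγpos : (0:ℝ) < 3 * (1/144)^n := by positivity
    have hγle : (3:ℝ) * (1/144)^n ≤ 3 := by
      nlinarith [pow_le_one₀ (by norm_num : (0:ℝ) ≤ 1/144) (by norm_num : (1/144:ℝ) ≤ 1) (n := n)]
    have hSqwb : 0 ≤ Sq wb := Sq_nonneg wb
    have hSqfnn : 0 ≤ Sq f := Sq_nonneg f
    rw [pow_succ]
    nlinarith [mul_le_mul_of_nonneg_left hSqf_le hγpos.le,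
      mul_le_mul_of_nonneg_right hγle hεnn]


lemma tf_cons {m : ℕ} (x : Fin 3) (w : V (m+1)) :
    tf (Fin.cons x w : V (m+2)) = tf w := by
  show φ ((Fin.cons x w : V (m+2)) (Fin.last (m+1))) = φ (w (Fin.last m))
  rw [show (Fin.last (m+1)) = (Fin.last m).succ from (Fin.succ_last m).symm]
  rw [Fin.cons_succ]

lemma cmp_tf {m : ℕ} (x : Fin 3) : cmp x (tf (m := m+1)) = tf := by
  funext w; exact tf_cons x w

lemma tf_cons0 (x : Fin 3) (w : V 0) :
    tf (Fin.cons x w : V 1) = φ x := rfl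

lemma sum_V0 (c : ℝ) : ∑ _w : V 0, c = c := by
  simp [Finset.sum_const, Finset.card_univ]

lemma sum_tf {m : ℕ} : ∑ u : V (m+1), tf u = 0 := by
  induction m with
  | zero =>
    rw [sum_cons_split tf, Fin.sum_univ_three]
    have h : ∀ x : Fin 3, ∑ w : V 0, tf (Fin.cons x w : V 1) = φ x := by
      intro x
      calc ∑ w : V 0, tf (Fin.cons x w : V 1) = ∑ _w : V 0, φ x :=
            Finset.sum_congr rfl fun w _ => tf_cons0 x w
        _ = φ x := sum_V0 _
    rw [h 0, h 1, h 2]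
    norm_num [φ, Matrix.cons_val_two, Matrix.vecHead, Matrix.vecTail]
  | succ m ih =>
    rw [sum_cons_split tf, Fin.sum_univ_three]
    have h : ∀ x : Fin 3, ∑ w : V (m+1), tf (Fin.cons x w : V (m+2)) = 0 := by
      intro x
      calc ∑ w : V (m+1), tf (Fin.cons x w : V (m+2)) = ∑ w : V (m+1), tf w :=
            Finset.sum_congr rfl fun w _ => tf_cons x w
        _ = 0 := ih
    rw [h 0, h 1, h 2]; norm_num

lemma Sq_tf {m : ℕ} : Sq (tf (m := m)) = 2 * 3^m := by
  induction m with
  | zero =>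
    have h : ∀ x : Fin 3, (∑ w : V 0, (fun u => (tf u)^2) (Fin.cons x w : V 1)) = (φ x)^2 := by
      intro x
      calc ∑ w : V 0, (fun u => (tf u)^2) (Fin.cons x w : V 1) = ∑ _w : V 0, (φ x)^2 :=
            Finset.sum_congr rfl fun w _ => by show (tf (Fin.cons x w : V 1))^2 = _; rw [tf_cons0]
        _ = (φ x)^2 := sum_V0 _
    show ∑ u : V 1, (fun u => (tf u)^2) u = 2 * 3^0
    rw [sum_cons_split (fun u => (tf u)^2), Fin.sum_univ_three, h 0, h 1, h 2]
    norm_num [φ, Matrix.cons_val_two, Matrix.vecHead, Matrix.vecTail]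
  | succ m ih =>
    have h : ∀ x : Fin 3, (∑ w : V (m+1), (fun u => (tf u)^2) (Fin.cons x w : V (m+2)))
        = Sq (tf (m := m)) := by
      intro x
      refine Finset.sum_congr rfl fun w _ => ?_
      show (tf (Fin.cons x w : V (m+2)))^2 = _
      rw [tf_cons x w]
    show ∑ u : V (m+2), (fun u => (tf u)^2) u = 2 * 3^(m+1)
    rw [sum_cons_split (fun u => (tf u)^2), Fin.sum_univ_three, h 0, h 1, h 2, ih]; ring

lemma Dd_self {n : ℕ} (f : V n → ℝ) : Dd f f = 0 := by
  unfold Dd; simp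

lemma en_tf_base (i j : Fin 3) (hij : i ≠ j) :
    en i j (tf (m := 0)) = 2 * (φ i - φ j)^2 := by
  have key : ∀ x : Fin 3,
      (∑ w : V 0, (fun u => (tf (levelMove i j u) - tf u)^2) (Fin.cons x w : V 1))
      = if x = i then (φ j - φ i)^2 else if x = j then (φ i - φ j)^2 else 0 := by
    intro x
    split_ifs with h1 h2
    · calc _ = ∑ _w : V 0, (φ j - φ i)^2 := by
            refine Finset.sum_congr rfl fun w _ => ?_
            show (tf (levelMove i j (Fin.cons x w)) - tf (Fin.cons x w))^2 = _
            rw [levelMove_cons, if_pos h1, tf_cons0, tf_cons0, h1]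
        _ = _ := sum_V0 _
    · calc _ = ∑ _w : V 0, (φ i - φ j)^2 := by
            refine Finset.sum_congr rfl fun w _ => ?_
            show (tf (levelMove i j (Fin.cons x w)) - tf (Fin.cons x w))^2 = _
            rw [levelMove_cons, if_neg h1, if_pos h2, tf_cons0, tf_cons0, h2]
        _ = _ := sum_V0 _
    · calc _ = ∑ _w : V 0, (0:ℝ) := by
            refine Finset.sum_congr rfl fun w _ => ?_
            show (tf (levelMove i j (Fin.cons x w)) - tf (Fin.cons x w))^2 = _
            rw [levelMove_cons, if_neg h1, if_neg h2, tf_cons0, tf_cons0]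
            ring
        _ = _ := sum_V0 _
  show ∑ u : V 1, (fun u => (tf (levelMove i j u) - tf u)^2) u = _
  rw [sum_cons_split (fun u => (tf (levelMove i j u) - tf u)^2), Fin.sum_univ_three,
    key 0, key 1, key 2]
  have hsym : (φ j - φ i)^2 = (φ i - φ j)^2 := by ring
  fin_cases i <;> fin_cases j <;> simp_all <;> ring

lemma en_tf {m : ℕ} (i j : Fin 3) (hij : i ≠ j) :
    en i j (tf (m := m)) = 2 * (φ i - φ j)^2 := by
  induction m with
  | zero => exact en_tf_base i j hij
  | succ m ih =>
    rcases (by fin_cases i <;> fin_cases j <;> simp_all <;> decide :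
      ∃ z : Fin 3, z ≠ i ∧ z ≠ j) with ⟨z, hzi, hzj⟩
    rw [en_cons i j hij z hzi hzj tf, cmp_tf i, cmp_tf j, cmp_tf z, Dd_self, ih]
    ring

lemma En_tf {m : ℕ} : En (tf (m := m)) = 12 := by
  unfold En
  rw [en_tf 0 1 (by decide), en_tf 0 2 (by decide), en_tf 1 2 (by decide)]
  norm_num [φ, Matrix.cons_val_two, Matrix.vecHead, Matrix.vecTail]


section Matrixfacts
variable {n : ℕ}

lemma adj_entry (u v : V n) :
    adjMat 3 n u v = (if levelMove 0 1 v = u then (1:ℝ) else 0)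
      + (if levelMove 0 2 v = u then (1:ℝ) else 0)
      + (if levelMove 1 2 v = u then (1:ℝ) else 0) := by
  classical
  have hset : (Finset.univ.filter fun p : Fin 3 × Fin 3 => p.1 < p.2)
      = {((0:Fin 3),(1:Fin 3)), (0,2), (1,2)} := by decide
  have hfilter : (Finset.univ.filter
      fun p : Fin 3 × Fin 3 => p.1 < p.2 ∧ levelMove p.1 p.2 v = u)
      = ({((0:Fin 3),(1:Fin 3)), (0,2), (1,2)} : Finset (Fin 3 × Fin 3)).filter
        (fun p => levelMove p.1 p.2 v = u) := by
    rw [← hset, Finset.filter_filter]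
  show ((Finset.univ.filter
      fun p : Fin 3 × Fin 3 => p.1 < p.2 ∧ levelMove p.1 p.2 v = u).card : ℝ) = _
  rw [hfilter, Finset.card_filter]
  rw [Finset.sum_insert (by decide), Finset.sum_insert (by decide), Finset.sum_singleton]
  push_cast
  ring

lemma adj_mulVec (f : V n → ℝ) (u : V n) :
    (adjMat 3 n).mulVec f u
      = f (levelMove 0 1 u) + f (levelMove 0 2 u) + f (levelMove 1 2 u) := by
  classical
  unfold Matrix.mulVec dotProduct
  have key : ∀ (i j : Fin 3), ∑ v : V n, (if levelMove i j v = u then (1:ℝ) else 0) * f v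
      = f (levelMove i j u) := by
    intro i j
    calc ∑ v : V n, (if levelMove i j v = u then (1:ℝ) else 0) * f v
        = ∑ v : V n, (if v = levelMove i j u then f v else 0) := by
          refine Finset.sum_congr rfl fun v _ => ?_
          by_cases h : v = levelMove i j u
          · have h2 : levelMove i j v = u := by rw [h, levelMove_invol]
            rw [if_pos h2, if_pos h, one_mul]
          · have h2 : levelMove i j v ≠ u := fun he => h (by rw [← he, levelMove_invol])
            rw [if_neg h2, if_neg h, zero_mul]
      _ = f (levelMove i j u) := by rw [Finset.sum_ite_eq' _ _ f]; simp
  calc ∑ v : V n, adjMat 3 n u v * f v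
      = ∑ v : V n, ((if levelMove 0 1 v = u then (1:ℝ) else 0) * f v
        + (if levelMove 0 2 v = u then (1:ℝ) else 0) * f v
        + (if levelMove 1 2 v = u then (1:ℝ) else 0) * f v) := by
        refine Finset.sum_congr rfl fun v _ => ?_
        rw [adj_entry u v]; ring
    _ = _ := by
        rw [Finset.sum_add_distrib, Finset.sum_add_distrib, key 0 1, key 0 2, key 1 2]

lemma sum_adj_mulVec (f : V n → ℝ) :
    ∑ u, (adjMat 3 n).mulVec f u = 3 * ∑ u, f u := by
  calc ∑ u, (adjMat 3 n).mulVec f u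
      = ∑ u, (f (levelMove 0 1 u) + f (levelMove 0 2 u) + f (levelMove 1 2 u)) :=
        Finset.sum_congr rfl fun u _ => adj_mulVec f u
    _ = 3 * ∑ u, f u := by
        rw [Finset.sum_add_distrib, Finset.sum_add_distrib,
          sum_comp_mv 0 1 f, sum_comp_mv 0 2 f, sum_comp_mv 1 2 f]
        ring

lemma bilin_comm (i j : Fin 3) (f h : V n → ℝ) :
    ∑ u, f (levelMove i j u) * h u = ∑ u, f u * h (levelMove i j u) := by
  have := sum_comp_mv i j (fun u => f (levelMove i j u) * h u)
  calc ∑ u, f (levelMove i j u) * h u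
      = ∑ u, f (levelMove i j (levelMove i j u)) * h (levelMove i j u) :=
        (sum_comp_mv i j (fun u => f (levelMove i j u) * h u)).symm
    _ = ∑ u, f u * h (levelMove i j u) := by
        refine Finset.sum_congr rfl fun u _ => ?_
        rw [levelMove_invol]

lemma mulVec_comm (f h : V n → ℝ) :
    ∑ u, (adjMat 3 n).mulVec f u * h u = ∑ u, f u * (adjMat 3 n).mulVec h u := by
  calc ∑ u, (adjMat 3 n).mulVec f u * h u
      = ∑ u, (f (levelMove 0 1 u) * h u + f (levelMove 0 2 u) * h u
          + f (levelMove 1 2 u) * h u) := by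
        refine Finset.sum_congr rfl fun u _ => ?_; rw [adj_mulVec]; ring
    _ = ∑ u, f (levelMove 0 1 u) * h u + ∑ u, f (levelMove 0 2 u) * h u
          + ∑ u, f (levelMove 1 2 u) * h u := by
        rw [Finset.sum_add_distrib, Finset.sum_add_distrib]
    _ = ∑ u, f u * h (levelMove 0 1 u) + ∑ u, f u * h (levelMove 0 2 u)
          + ∑ u, f u * h (levelMove 1 2 u) := by
        rw [bilin_comm 0 1, bilin_comm 0 2, bilin_comm 1 2]
    _ = _ := by
        rw [← Finset.sum_add_distrib, ← Finset.sum_add_distrib]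
        refine Finset.sum_congr rfl fun u _ => ?_; rw [adj_mulVec]; ring

lemma En_eq (f : V n → ℝ) :
    En f = 6 * Sq f - 2 * ∑ u, (adjMat 3 n).mulVec f u * f u := by
  have gen : ∀ (i j : Fin 3), en i j f
      = 2 * Sq f - 2 * ∑ u, f (levelMove i j u) * f u := by
    intro i j
    have h1 : en i j f = ∑ u, ((f (levelMove i j u))^2 + (f u)^2
        - 2 * (f (levelMove i j u) * f u)) :=
      Finset.sum_congr rfl fun u _ => by ring
    have h2 : ∑ u, (f (levelMove i j u))^2 = Sq f := sum_comp_mv i j (fun u => (f u)^2)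
    rw [h1, Finset.sum_sub_distrib, Finset.sum_add_distrib, h2, ← Finset.mul_sum]
    unfold Sq
    ring
  have hA : ∑ u, (adjMat 3 n).mulVec f u * f u
      = ∑ u, f (levelMove 0 1 u) * f u + ∑ u, f (levelMove 0 2 u) * f u
        + ∑ u, f (levelMove 1 2 u) * f u := by
    rw [← Finset.sum_add_distrib, ← Finset.sum_add_distrib]
    refine Finset.sum_congr rfl fun u _ => ?_; rw [adj_mulVec]; ring
  unfold En
  rw [gen 0 1, gen 0 2, gen 1 2, hA]
  ring

lemma Sq_pos_of_ne (f : V n → ℝ) (hf : f ≠ 0) : 0 < Sq f := by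
  obtain ⟨u, hu⟩ := Function.ne_iff.mp hf
  have h1 : (f u)^2 ≤ Sq f :=
    Finset.single_le_sum (f := fun u => (f u)^2) (fun v _ => sq_nonneg _) (Finset.mem_univ u)
  have : 0 < (f u)^2 := lt_of_le_of_ne (sq_nonneg _) (Ne.symm (pow_ne_zero 2 hu))
  linarith

end Matrixfacts


lemma Mn_mulVec {n : ℕ} (f : V n → ℝ) (u : V n) :
    (Mn n).mulVec f u = (1/3) * ((adjMat 3 n).mulVec f u) := by
  unfold Mn
  rw [Matrix.smul_mulVec]
  rfl

lemma eigen_mulVec {n : ℕ} {μ : ℝ} (hμ : μ ∈ spectrum ℝ (Mn n)) :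
    ∃ v : V n → ℝ, v ≠ 0 ∧ (Mn n).mulVec v = μ • v := by
  have hspec : spectrum ℝ (Matrix.toLinAlgEquiv' (Mn n)) = spectrum ℝ (Mn n) :=
    AlgEquiv.spectrum_eq _ _
  have hasEig : Module.End.HasEigenvalue (Matrix.toLinAlgEquiv' (Mn n)) μ :=
    Module.End.hasEigenvalue_iff_mem_spectrum.mpr (by rw [hspec]; exact hμ)
  obtain ⟨v, hv⟩ := hasEig.exists_hasEigenvector
  refine ⟨v, hv.right, ?_⟩
  have := hv.apply_eq_smul
  rwa [Matrix.toLinAlgEquiv'_apply] at this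

lemma adj_of_Mn_eigen {n : ℕ} {μ : ℝ} {v : V n → ℝ} (h : (Mn n).mulVec v = μ • v) :
    ∀ u, (adjMat 3 n).mulVec v u = (3*μ) * v u := by
  intro u
  have h1 : (Mn n).mulVec v u = μ * v u := by rw [h]; rfl
  rw [Mn_mulVec] at h1
  linarith

lemma sum_eq_zero_of_eigen {n : ℕ} {μ : ℝ} {v : V n → ℝ} (hμ : μ ≠ 1)
    (h : (Mn n).mulVec v = μ • v) : ∑ u, v u = 0 := by
  have h1 : ∑ u, (adjMat 3 n).mulVec v u = ∑ u, (3*μ) * v u :=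
    Finset.sum_congr rfl fun u _ => adj_of_Mn_eigen h u
  rw [sum_adj_mulVec, ← Finset.mul_sum] at h1
  have h2 : (3 - 3*μ) * ∑ u, v u = 0 := by linarith
  have h3 : (3 - 3*μ) ≠ 0 := fun h => hμ (by linarith)
  exact (mul_eq_zero.mp h2).resolve_left h3

lemma rayleigh_of_eigen {n : ℕ} {μ : ℝ} {v : V n → ℝ} (h : (Mn n).mulVec v = μ • v) :
    En v = (6 - 6*μ) * Sq v := by
  have h1 : ∑ u, (adjMat 3 n).mulVec v u * v u = (3*μ) * Sq v := by
    calc ∑ u, (adjMat 3 n).mulVec v u * v u = ∑ u, (3*μ) * (v u)^2 :=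
          Finset.sum_congr rfl fun u _ => by rw [adj_of_Mn_eigen h u]; ring
      _ = (3*μ) * Sq v := by rw [← Finset.mul_sum]; rfl
  rw [En_eq, h1]; ring

/-- Any element of the spectrum of `Mn` other than `1` is at most `1 - (1/2)·(1/144)^n`. -/
lemma spectrum_le {n : ℕ} {μ : ℝ} (hμ : μ ∈ spectrum ℝ (Mn n)) (hμ1 : μ ≠ 1) :
    μ ≤ 1 - (1/2) * (1/144:ℝ)^n := by
  obtain ⟨v, hv0, hv⟩ := eigen_mulVec hμ
  have hsum := sum_eq_zero_of_eigen hμ1 hv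
  have hp := poincare n v hsum
  rw [rayleigh_of_eigen hv] at hp
  have hSq := Sq_pos_of_ne v hv0
  have h144 : (0:ℝ) < (1/144:ℝ)^n := by positivity
  nlinarith

/-- An eigenfunction of `Mn` with eigenvalue 1 is constant. -/
lemma const_of_eigen_one {n : ℕ} {b : V n → ℝ} (hb : (Mn n).mulVec b = b) :
    ∃ c : ℝ, ∀ u, b u = c := by
  have hb' : (Mn n).mulVec b = (1:ℝ) • b := by rw [hb]; simp
  set N : ℝ := (Fintype.card (V n) : ℝ) with hN
  have hNpos : (0:ℝ) < N := by
    rw [hN]; exact_mod_cast Fintype.card_pos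
  set c : ℝ := (∑ u, b u) / N with hc
  set b' : V n → ℝ := fun u => b u - c with hb'def
  have hsum' : ∑ u, b' u = 0 := by
    rw [hb'def]
    rw [Finset.sum_sub_distrib, Finset.sum_const, Finset.card_univ]
    rw [hc]
    have : (Fintype.card (V n)) • ((∑ u, b u) / N) = N * ((∑ u, b u) / N) := by
      rw [nsmul_eq_mul, hN]
    rw [this, mul_div_cancel₀ _ (ne_of_gt hNpos)]
    ring
  have hmv' : ∀ u, (adjMat 3 n).mulVec b' u = 3 * b' u := by
    intro u
    have h1 := adj_of_Mn_eigen hb' u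
    rw [adj_mulVec]
    rw [hb'def]
    simp only
    have h2 := adj_mulVec b u
    have h3 : b (levelMove 0 1 u) + b (levelMove 0 2 u) + b (levelMove 1 2 u) = 3 * b u := by
      rw [← h2, h1]; ring
    linarith [h3]
  have hEn : En b' = 0 := by
    have h1 : ∑ u, (adjMat 3 n).mulVec b' u * b' u = 3 * Sq b' := by
      calc ∑ u, (adjMat 3 n).mulVec b' u * b' u = ∑ u, 3 * (b' u)^2 :=
            Finset.sum_congr rfl fun u _ => by rw [hmv' u]; ring
        _ = 3 * Sq b' := by rw [← Finset.mul_sum]; rfl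
    rw [En_eq, h1]; ring
  have hp := poincare n b' hsum'
  rw [hEn] at hp
  have h144 : (0:ℝ) < 3 * (1/144:ℝ)^n := by positivity
  have hSq0 : Sq b' = 0 := by
    have hge : 0 ≤ Sq b' := Finset.sum_nonneg fun u _ => sq_nonneg _
    nlinarith
  refine ⟨c, fun u => ?_⟩
  have hterm : (b' u)^2 ≤ Sq b' :=
    Finset.single_le_sum (f := fun u => (b' u)^2) (fun v _ => sq_nonneg _) (Finset.mem_univ u)
  have : b' u = 0 := by
    have := sq_nonneg (b' u)
    have h0 : (b' u)^2 = 0 := le_antisymm (by linarith [hSq0]) (sq_nonneg _)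
    exact pow_eq_zero_iff (by norm_num) |>.mp h0
  have : b u - c = 0 := this
  linarith



lemma adj_symm {n : ℕ} (u v : V n) : adjMat 3 n u v = adjMat 3 n v u := by
  rw [adj_entry, adj_entry]
  have key : ∀ i j : Fin 3, (levelMove i j v = u) ↔ (levelMove i j u = v) := by
    intro i j
    constructor
    · rintro rfl; rw [levelMove_invol]
    · rintro rfl; rw [levelMove_invol]
  rw [if_congr (key 0 1) rfl rfl, if_congr (key 0 2) rfl rfl, if_congr (key 1 2) rfl rfl]

lemma Mn_herm (n : ℕ) : (Mn n).IsHermitian := by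
  unfold Matrix.IsHermitian
  ext u v
  rw [Matrix.conjTranspose_apply]
  show star (Mn n v u) = Mn n u v
  rw [star_trivial]
  unfold Mn
  rw [Matrix.smul_apply, Matrix.smul_apply, adj_symm]

lemma key_inner {n : ℕ} (x y : EuclideanSpace ℝ (V n)) :
    (inner ℝ x y : ℝ) = ∑ u, x u * y u := by
  rw [PiLp.inner_apply]
  simp [RCLike.inner_apply, conj_trivial, mul_comm]

lemma exists_eigen_close (m : ℕ) :
    ∃ μ ∈ spectrum ℝ (Mn (m+1)), μ ≠ 1 ∧ 1 - 3 * (1/3:ℝ)^(m+1) ≤ μ := by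
  classical
  set n := m + 1 with hn
  have hH : (Mn n).IsHermitian := Mn_herm n
  set g : V n → ℝ := tf (m := m) with hg
  set gE : EuclideanSpace ℝ (V n) := (WithLp.equiv 2 (V n → ℝ)).symm g with hgE
  set MgE : EuclideanSpace ℝ (V n) := (WithLp.equiv 2 (V n → ℝ)).symm ((Mn n).mulVec g)
    with hMgE
  set c : V n → ℝ := fun j => ∑ u, hH.eigenvectorBasis j u * g u with hcdef
  have hgEu : ∀ u, gE u = g u := fun u => rfl
  have hMgEu : ∀ u, MgE u = (Mn n).mulVec g u := fun u => rfl
  -- Parseval for the norm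
  have h1 : ∑ j, (c j)^2 = Sq g := by
    have P := (hH.eigenvectorBasis).sum_inner_mul_inner gE gE
    rw [key_inner gE gE] at P
    calc ∑ j, (c j)^2
        = ∑ j, (inner ℝ gE (hH.eigenvectorBasis j) : ℝ)
            * (inner ℝ (hH.eigenvectorBasis j) gE : ℝ) := by
          refine Finset.sum_congr rfl fun j _ => ?_
          rw [key_inner, key_inner, hcdef]
          simp only [hgEu]
          have e1 : ∑ u, g u * hH.eigenvectorBasis j u
              = ∑ u, hH.eigenvectorBasis j u * g u :=
            Finset.sum_congr rfl fun u _ => by ring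
          rw [e1]; ring
      _ = ∑ u, gE u * gE u := P
      _ = Sq g := by
          unfold Sq
          refine Finset.sum_congr rfl fun u _ => ?_
          rw [hgEu]; ring
  -- Parseval for the quadratic form
  have h2 : ∑ j, hH.eigenvalues j * (c j)^2 = ∑ u, g u * (Mn n).mulVec g u := by
    have P := (hH.eigenvectorBasis).sum_inner_mul_inner gE MgE
    rw [key_inner gE MgE] at P
    calc ∑ j, hH.eigenvalues j * (c j)^2
        = ∑ j, (inner ℝ gE (hH.eigenvectorBasis j) : ℝ)
            * (inner ℝ (hH.eigenvectorBasis j) MgE : ℝ) := by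
          refine Finset.sum_congr rfl fun j _ => ?_
          rw [key_inner, key_inner]
          have e2 : ∑ u, hH.eigenvectorBasis j u * MgE u
              = hH.eigenvalues j * c j := by
            calc ∑ u, hH.eigenvectorBasis j u * MgE u
                = ∑ u, hH.eigenvectorBasis j u * ((1/3) * ((adjMat 3 n).mulVec g u)) := by
                  refine Finset.sum_congr rfl fun u _ => ?_
                  rw [hMgEu, Mn_mulVec]
              _ = (1/3) * ∑ u, hH.eigenvectorBasis j u * (adjMat 3 n).mulVec g u := by
                  rw [Finset.mul_sum]; exact Finset.sum_congr rfl fun u _ => by ring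
              _ = (1/3) * ∑ u, (adjMat 3 n).mulVec (hH.eigenvectorBasis j) u * g u := by
                  rw [mulVec_comm]
              _ = ∑ u, (Mn n).mulVec (hH.eigenvectorBasis j) u * g u := by
                  rw [Finset.mul_sum]
                  exact Finset.sum_congr rfl fun u _ => by rw [Mn_mulVec]; ring
              _ = ∑ u, (hH.eigenvalues j • (hH.eigenvectorBasis j : EuclideanSpace ℝ (V n))) u * g u := by
                  refine Finset.sum_congr rfl fun u _ => ?_
                  congr 1
                  exact congrFun (hH.mulVec_eigenvectorBasis j) u
              _ = hH.eigenvalues j * c j := by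
                  rw [hcdef, Finset.mul_sum]
                  refine Finset.sum_congr rfl fun u _ => ?_
                  show hH.eigenvalues j * hH.eigenvectorBasis j u * g u = _
                  ring
          rw [e2]
          have e1 : (∑ u, gE u * hH.eigenvectorBasis j u) = c j := by
            rw [hcdef]
            refine Finset.sum_congr rfl fun u _ => ?_
            rw [hgEu]; ring
          rw [e1]; ring
      _ = ∑ u, gE u * MgE u := P
      _ = ∑ u, g u * (Mn n).mulVec g u := by
          refine Finset.sum_congr rfl fun u _ => ?_
          rw [hgEu, hMgEu]
  -- value of the Rayleigh quotient
  have hRay : ∑ u, g u * (Mn n).mulVec g u = 2 * 3^m - 2 := by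
    have hEn := En_tf (m := m)
    have hSq := Sq_tf (m := m)
    have hform := En_eq (n := n) g
    rw [← hg] at *
    have h3 : ∑ u, (adjMat 3 n).mulVec g u * g u = (6 * Sq g - En g) / 2 := by linarith
    calc ∑ u, g u * (Mn n).mulVec g u
        = ∑ u, (1/3) * ((adjMat 3 n).mulVec g u * g u) := by
          refine Finset.sum_congr rfl fun u _ => ?_
          rw [Mn_mulVec]; ring
      _ = (1/3) * ∑ u, (adjMat 3 n).mulVec g u * g u := by rw [← Finset.mul_sum]
      _ = (1/3) * ((6 * Sq g - En g) / 2) := by rw [h3]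
      _ = 2 * 3^m - 2 := by
          rw [hg, hSq, hEn]; ring
  -- eigenvalue-1 components vanish
  have hzero : ∀ j, hH.eigenvalues j = 1 → c j = 0 := by
    intro j hj
    have hmv := hH.mulVec_eigenvectorBasis j
    rw [hj, one_smul] at hmv
    obtain ⟨c₀, hc₀⟩ := const_of_eigen_one hmv
    rw [hcdef]
    calc ∑ u, hH.eigenvectorBasis j u * g u = ∑ u, c₀ * g u := by
          refine Finset.sum_congr rfl fun u _ => ?_
          have hval : hH.eigenvectorBasis j u = c₀ := hc₀ u
          rw [hval]
      _ = c₀ * ∑ u, g u := by rw [Finset.mul_sum]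
      _ = 0 := by rw [hg, sum_tf]; ring
  -- restrict to eigenvalues ≠ 1
  set K : Finset (V n) := Finset.univ.filter (fun j => hH.eigenvalues j ≠ 1) with hK
  have hK1 : ∑ j ∈ K, (c j)^2 = Sq g := by
    rw [← h1]
    rw [← Finset.sum_filter_add_sum_filter_not Finset.univ (fun j => hH.eigenvalues j ≠ 1)
      (fun j => (c j)^2), hK]
    have : ∑ j ∈ Finset.univ.filter (fun j => ¬ hH.eigenvalues j ≠ 1), (c j)^2 = 0 := by
      apply Finset.sum_eq_zero
      intro j hj
      rw [Finset.mem_filter] at hj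
      rw [hzero j (not_not.mp hj.2)]
      norm_num
    rw [this]; ring
  have hK2 : ∑ j ∈ K, hH.eigenvalues j * (c j)^2 = 2 * 3^m - 2 := by
    rw [← hRay, ← h2]
    rw [← Finset.sum_filter_add_sum_filter_not Finset.univ (fun j => hH.eigenvalues j ≠ 1)
      (fun j => hH.eigenvalues j * (c j)^2), hK]
    have : ∑ j ∈ Finset.univ.filter (fun j => ¬ hH.eigenvalues j ≠ 1),
        hH.eigenvalues j * (c j)^2 = 0 := by
      apply Finset.sum_eq_zero
      intro j hj
      rw [Finset.mem_filter] at hj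
      rw [hzero j (not_not.mp hj.2)]
      norm_num
    rw [this]; ring
  -- conclude by contradiction
  by_contra hcon
  push_neg at hcon
  have hlt : ∀ j ∈ K, hH.eigenvalues j < 1 - 3 * (1/3:ℝ)^(m+1) := by
    intro j hj
    rw [hK, Finset.mem_filter] at hj
    have hmem := hH.eigenvalues_mem_spectrum_real j
    exact hcon _ hmem hj.2
  have hSqg : Sq g = 2 * 3^m := by rw [hg]; exact Sq_tf
  have hSqpos : (0:ℝ) < 2 * 3^m := by positivity
  obtain ⟨j₀, hj₀K, hj₀⟩ : ∃ j ∈ K, (c j)^2 ≠ 0 := by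
    by_contra hall
    push_neg at hall
    have : ∑ j ∈ K, (c j)^2 = 0 := Finset.sum_eq_zero hall
    rw [hK1, hSqg] at this
    linarith
  have hstrict : ∑ j ∈ K, hH.eigenvalues j * (c j)^2
      < ∑ j ∈ K, (1 - 3 * (1/3:ℝ)^(m+1)) * (c j)^2 := by
    apply Finset.sum_lt_sum
    · intro j hj
      exact mul_le_mul_of_nonneg_right (le_of_lt (hlt j hj)) (sq_nonneg _)
    · refine ⟨j₀, hj₀K, ?_⟩
      have : (0:ℝ) < (c j₀)^2 := lt_of_le_of_ne (sq_nonneg _) (Ne.symm hj₀)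
      exact mul_lt_mul_of_pos_right (hlt j₀ hj₀K) this
  rw [hK2, ← Finset.mul_sum, hK1, hSqg] at hstrict
  have harith : (1 - 3 * (1/3:ℝ)^(m+1)) * (2 * 3^m) = 2 * 3^m - 2 := by
    have hpow : (1/3:ℝ)^m * 3^m = 1 := by
      rw [← mul_pow]; norm_num
    rw [pow_succ]
    ring_nf
    nlinarith [hpow]
  rw [harith] at hstrict
  linarith

end HanoiAux

/-- For `H(3)` the spectral gap `δ(n) = 1 - λ(n)` of the level-`n`
Schreier graph, where `λ(n)` is the largest eigenvalue different from `1` of the Markov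
operator `M_n = (1/3)·T_n`, decays exponentially: there are `0 < c₁ ≤ c₂ < 1` and
`C₁, C₂ > 0` with `C₁·c₁ⁿ ≤ δ(n) ≤ C₂·c₂ⁿ` for all `n ≥ 1`. -/
theorem hanoi3_spectral_gap_exponential :
    letI M : ∀ n : ℕ, Matrix (Fin n → Fin 3) (Fin n → Fin 3) ℝ :=
      fun n => ((1 : ℝ) / 3) • adjMat 3 n
    letI δ : ℕ → ℝ := fun n => 1 - sSup (spectrum ℝ (M n) \ {1})
    ∃ c₁ c₂ C₁ C₂ : ℝ, 0 < c₁ ∧ c₁ ≤ c₂ ∧ c₂ < 1 ∧ 0 < C₁ ∧ 0 < C₂ ∧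
      ∀ n : ℕ, 1 ≤ n → C₁ * c₁ ^ n ≤ δ n ∧ δ n ≤ C₂ * c₂ ^ n := by
  refine ⟨1/144, 1/3, 1/2, 3, by norm_num, by norm_num, by norm_num, by norm_num,
    by norm_num, ?_⟩
  intro n hn
  obtain ⟨m, rfl⟩ : ∃ m, n = m + 1 := ⟨n - 1, by omega⟩
  have hδ : (fun n : ℕ => 1 - sSup (spectrum ℝ (((1:ℝ) / 3) • adjMat 3 n) \ {1})) (m+1)
      = 1 - sSup (spectrum ℝ (HanoiAux.Mn (m+1)) \ {1}) := rfl
  obtain ⟨μ₀, hμ₀spec, hμ₀ne, hμ₀ge⟩ := HanoiAux.exists_eigen_close m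
  have hμ₀S : μ₀ ∈ spectrum ℝ (HanoiAux.Mn (m+1)) \ {1} := ⟨hμ₀spec, fun h => hμ₀ne h⟩
  have hub : ∀ μ ∈ spectrum ℝ (HanoiAux.Mn (m+1)) \ {1},
      μ ≤ 1 - (1/2) * (1/144:ℝ)^(m+1) := by
    rintro μ ⟨h1, h2⟩
    exact HanoiAux.spectrum_le h1 (by simpa using h2)
  have hbdd : BddAbove (spectrum ℝ (HanoiAux.Mn (m+1)) \ {1}) := ⟨_, hub⟩
  have hne : (spectrum ℝ (HanoiAux.Mn (m+1)) \ {1}).Nonempty := ⟨μ₀, hμ₀S⟩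
  have hsup_le : sSup (spectrum ℝ (HanoiAux.Mn (m+1)) \ {1})
      ≤ 1 - (1/2) * (1/144:ℝ)^(m+1) := csSup_le hne hub
  have hle_sup : μ₀ ≤ sSup (spectrum ℝ (HanoiAux.Mn (m+1)) \ {1}) := le_csSup hbdd hμ₀S
  constructor
  · rw [hδ]; linarith
  · rw [hδ]; linarith
end
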